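/- Let f be the bilinear RFIF from the bilinear RFIF setup (with the integer K≥2). Then the lower box dimension of Γf is at least max{2, 1 + liminf_{n→∞} log O(f,n)/(n log K)}, and the upper box dimension of Γf is at most 1 + limsup_{n→∞} log(O(f,n)+2KⁿN)/(n log K). -/

import Mathlib

/- Bilinear recurrent fractal interpolation surfaces on [0,1]² (Liang–Ruan,
   "Construction and box dimension of recurrent fractal interpolation surfaces"). -/

noncomputable section
open Set Filter

namespace RFIS

/-- The grid point `x_i = i / N` (also used for `y_j = j / N`). -/
def xg (N i : ℕ) : ℝ := (i : ℝ) / (N : ℝ)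

/-- The interval `I_i = [x_{i-1}, x_i]` (also `J_j`). -/
def Ii (N i : ℕ) : Set ℝ := Icc (xg N (i - 1)) (xg N i)

/-- The unit square `[0,1]²`. -/
def sq : Set (ℝ × ℝ) := Icc (0 : ℝ) 1 ×ˢ Icc (0 : ℝ) 1

/-- The cell `D_{ij} = I_i × J_j`. -/
def Dij (N i j : ℕ) : Set (ℝ × ℝ) := Ii N i ×ˢ Ii N j

/-- The point `x'_i = x_{px i}` chosen from the grid. -/
def xp (N : ℕ) (px : ℕ → ℕ) (i : ℕ) : ℝ := xg N (px i)

/-- The interval `I'_i`, with endpoints `x'_{i-1}` and `x'_i`. -/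
def Ii' (N : ℕ) (px : ℕ → ℕ) (i : ℕ) : Set ℝ := uIcc (xp N px (i - 1)) (xp N px i)

/-- The domain `D'_{ij} = I'_i × J'_j`. -/
def Dij' (N : ℕ) (px py : ℕ → ℕ) (i j : ℕ) : Set (ℝ × ℝ) := Ii' N px i ×ˢ Ii' N py j

/-- The affine map `u_i : I'_i → I_i` with `u_i(x'_{i-1}) = x_{i-1}` and `u_i(x'_i) = x_i`
(also used for `v_j`). -/
def usub (N : ℕ) (px : ℕ → ℕ) (i : ℕ) (t : ℝ) : ℝ :=
  xg N (i - 1) + (t - xp N px (i - 1)) * ((xg N i - xg N (i - 1)) / (xp N px i - xp N px (i - 1)))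

/-- `F` is bilinear on `E`: of the form `a + b x + c y + d x y` on `E`. -/
def IsBilinearOn (F : ℝ × ℝ → ℝ) (E : Set (ℝ × ℝ)) : Prop :=
  ∃ a b c d : ℝ, ∀ p ∈ E, F p = a + b * p.1 + c * p.2 + d * p.1 * p.2

/-- The bilinear RFIF setup on `[0,1]²`: data `z_{ij}` on the uniform `N × N` grid
(`M = N`, `x_i = y_i = i/N`), vertical scaling factors `s_{ij}` with `|s_{ij}| < 1`,
the points `x'_i = x_{px i}`, `y'_j = y_{py j}` with `|I'_i| = K |I_i|`, `|J'_j| = K |J_j|`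
and the domains `D'_{ij}` pairwise equal or with disjoint interiors; the functions `S`, `h`
bilinear on each cell with the prescribed grid values, the bilinear functions `g_{ij}` with
corner values `z'`, and the bilinear RFIF `f`: the continuous function interpolating the
data and satisfying `f(u_i x, v_j y) = S(u_i x, v_j y)(f(x,y) − g_{ij}(x,y)) + h(u_i x, v_j y)`
on each `D'_{ij}`. -/
structure Setup where
  N : ℕ
  K : ℕ
  hN : 2 ≤ N
  hK : 2 ≤ K
  px : ℕ → ℕ
  py : ℕ → ℕ
  hpx : ∀ i ≤ N, px i ≤ N
  hpy : ∀ j ≤ N, py j ≤ N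
  hKx : ∀ i, 1 ≤ i → i ≤ N → |xp N px i - xp N px (i - 1)| = (K : ℝ) * (xg N i - xg N (i - 1))
  hKy : ∀ j, 1 ≤ j → j ≤ N → |xp N py j - xp N py (j - 1)| = (K : ℝ) * (xg N j - xg N (j - 1))
  hdisj : ∀ i₁ j₁ i₂ j₂, 1 ≤ i₁ → i₁ ≤ N → 1 ≤ j₁ → j₁ ≤ N → 1 ≤ i₂ → i₂ ≤ N → 1 ≤ j₂ → j₂ ≤ N →
    Dij' N px py i₁ j₁ = Dij' N px py i₂ j₂ ∨
      interior (Dij' N px py i₁ j₁) ∩ interior (Dij' N px py i₂ j₂) = ∅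
  z : ℕ → ℕ → ℝ
  s : ℕ → ℕ → ℝ
  hs : ∀ i ≤ N, ∀ j ≤ N, |s i j| < 1
  S : ℝ × ℝ → ℝ
  hScont : ContinuousOn S sq
  hSbil : ∀ i j, 1 ≤ i → i ≤ N → 1 ≤ j → j ≤ N → IsBilinearOn S (Dij N i j)
  hSval : ∀ i ≤ N, ∀ j ≤ N, S (xg N i, xg N j) = s i j
  h : ℝ × ℝ → ℝ
  hhcont : ContinuousOn h sq
  hhbil : ∀ i j, 1 ≤ i → i ≤ N → 1 ≤ j → j ≤ N → IsBilinearOn h (Dij N i j)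
  hhval : ∀ i ≤ N, ∀ j ≤ N, h (xg N i, xg N j) = z i j
  g : ℕ → ℕ → ℝ × ℝ → ℝ
  hgbil : ∀ i j, 1 ≤ i → i ≤ N → 1 ≤ j → j ≤ N → IsBilinearOn (g i j) (Dij' N px py i j)
  hgval : ∀ i j, 1 ≤ i → i ≤ N → 1 ≤ j → j ≤ N →
    ∀ k ∈ ({i - 1, i} : Set ℕ), ∀ l ∈ ({j - 1, j} : Set ℕ),
      g i j (xp N px k, xp N py l) = z (px k) (py l)
  f : ℝ × ℝ → ℝ
  hfcont : ContinuousOn f sq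
  hfval : ∀ i ≤ N, ∀ j ≤ N, f (xg N i, xg N j) = z i j
  hfeq : ∀ i j, 1 ≤ i → i ≤ N → 1 ≤ j → j ≤ N → ∀ p ∈ Dij' N px py i j,
    f (usub N px i p.1, usub N py j p.2)
      = S (usub N px i p.1, usub N py j p.2) * (f p - g i j p)
        + h (usub N px i p.1, usub N py j p.2)

/-- The oscillation `O(f, E) = sup {f(x') − f(x'') : x', x'' ∈ E}`. -/
def Osc (f : ℝ × ℝ → ℝ) (E : Set (ℝ × ℝ)) : ℝ :=
  sSup {d : ℝ | ∃ p ∈ E, ∃ q ∈ E, d = f p - f q}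

/-- The dyadic-type square `Dⁿ_{kl} = [(k-1)/(KⁿN), k/(KⁿN)] × [(l-1)/(KⁿN), l/(KⁿN)]`. -/
def Dn (N K n k l : ℕ) : Set (ℝ × ℝ) :=
  Icc (((k : ℝ) - 1) / ((K : ℝ) ^ n * (N : ℝ))) ((k : ℝ) / ((K : ℝ) ^ n * (N : ℝ))) ×ˢ
    Icc (((l : ℝ) - 1) / ((K : ℝ) ^ n * (N : ℝ))) ((l : ℝ) / ((K : ℝ) ^ n * (N : ℝ)))

open Classical in
/-- `O(f, n, U) = Σ { O(f, Dⁿ_{kl}) : Dⁿ_{kl} ⊆ U }`. -/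
def OscSum (f : ℝ × ℝ → ℝ) (N K n : ℕ) (U : Set (ℝ × ℝ)) : ℝ :=
  ∑ k ∈ Finset.Icc 1 (K ^ n * N), ∑ l ∈ Finset.Icc 1 (K ^ n * N),
    if Dn N K n k l ⊆ U then Osc f (Dn N K n k l) else 0

/-- The `ε`-coordinate cube `∏_{i=1}^3 [k_i ε, (k_i+1) ε]` in `ℝ³`. -/
def cube (ε : ℝ) (k : ℤ × ℤ × ℤ) : Set (ℝ × ℝ × ℝ) :=
  Icc ((k.1 : ℝ) * ε) (((k.1 : ℝ) + 1) * ε) ×ˢ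
    Icc ((k.2.1 : ℝ) * ε) (((k.2.1 : ℝ) + 1) * ε) ×ˢ
      Icc ((k.2.2 : ℝ) * ε) (((k.2.2 : ℝ) + 1) * ε)

/-- `N_E(ε)`: the number of `ε`-coordinate cubes intersecting `E`. -/
def Ncubes (E : Set (ℝ × ℝ × ℝ)) (ε : ℝ) : ℕ :=
  {k : ℤ × ℤ × ℤ | (cube ε k ∩ E).Nonempty}.ncard

/-- `log N_E(ε) / log (1/ε)`. -/
def boxRatio (E : Set (ℝ × ℝ × ℝ)) (ε : ℝ) : ℝ :=
  Real.log (Ncubes E ε) / Real.log (1 / ε)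

/-- The upper box dimension `lim sup_{ε→0+} log N_E(ε) / log (1/ε)`. -/
def upperBoxDim (E : Set (ℝ × ℝ × ℝ)) : ℝ :=
  limsup (boxRatio E) (nhdsWithin 0 (Ioi 0))

/-- The lower box dimension `lim inf_{ε→0+} log N_E(ε) / log (1/ε)`. -/
def lowerBoxDim (E : Set (ℝ × ℝ × ℝ)) : ℝ :=
  liminf (boxRatio E) (nhdsWithin 0 (Ioi 0))

/-- The box dimension of `E` exists and equals `d`. -/
def HasBoxDim (E : Set (ℝ × ℝ × ℝ)) (d : ℝ) : Prop :=
  Tendsto (boxRatio E) (nhdsWithin 0 (Ioi 0)) (nhds d)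

/-- The graph `Γ f|_E = {(x, y, f(x,y)) : (x,y) ∈ E}`. -/
def graphOn (f : ℝ × ℝ → ℝ) (E : Set (ℝ × ℝ)) : Set (ℝ × ℝ × ℝ) :=
  (fun p : ℝ × ℝ => (p.1, p.2, f p)) '' E

/-- `B` is a partition of `[0,1]²`: nonempty sets covering `[0,1]²` with pairwise
disjoint interiors. -/
def IsPartition (m : ℕ) (B : Fin m → Set (ℝ × ℝ)) : Prop :=
  (∀ r, (B r).Nonempty) ∧ (⋃ r, B r) = sq ∧
    ∀ r t, r ≠ t → interior (B r) ∩ interior (B t) = ∅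

/-- The partition `B` is compatible with `{D_{ij}, D'_{ij}}`: every `D_{ij}` lies in some
`B_r` and every `D'_{ij}` in some `B_t`; and whenever some `(i,j)` has `D_{ij} ⊆ B_r` and
`D'_{ij} ⊆ B_t`, then `B_t = ⋃ {D'_{kl} : D_{kl} ⊆ B_r, D'_{kl} ⊆ B_t}`. -/
def IsCompatible (st : Setup) {m : ℕ} (B : Fin m → Set (ℝ × ℝ)) : Prop :=
  (∀ i j, 1 ≤ i → i ≤ st.N → 1 ≤ j → j ≤ st.N →
    (∃ r, Dij st.N i j ⊆ B r) ∧ (∃ t, Dij' st.N st.px st.py i j ⊆ B t)) ∧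
  (∀ r t : Fin m,
    (∃ i j, 1 ≤ i ∧ i ≤ st.N ∧ 1 ≤ j ∧ j ≤ st.N ∧
      Dij st.N i j ⊆ B r ∧ Dij' st.N st.px st.py i j ⊆ B t) →
    B t = ⋃ (k : ℕ) (l : ℕ)
      (_ : 1 ≤ k ∧ k ≤ st.N ∧ 1 ≤ l ∧ l ≤ st.N ∧
        Dij st.N k l ⊆ B r ∧ Dij' st.N st.px st.py k l ⊆ B t),
      Dij' st.N st.px st.py k l)

/-- The index set `Σ_N × Σ_N = {1,…,N}²`. -/
def idxS (N : ℕ) : Finset (ℕ × ℕ) := Finset.Icc 1 N ×ˢ Finset.Icc 1 N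

open Classical in
/-- `Λ_r = {(i,j) : D_{ij} ⊆ B_r}`. -/
def Lam (st : Setup) {m : ℕ} (B : Fin m → Set (ℝ × ℝ)) (r : Fin m) : Finset (ℕ × ℕ) :=
  (idxS st.N).filter fun ij => Dij st.N ij.1 ij.2 ⊆ B r

open Classical in
/-- `Λ'_t = {(i,j) : D'_{ij} ⊆ B_t}`. -/
def Lam' (st : Setup) {m : ℕ} (B : Fin m → Set (ℝ × ℝ)) (t : Fin m) : Finset (ℕ × ℕ) :=
  (idxS st.N).filter fun ij => Dij' st.N st.px st.py ij.1 ij.2 ⊆ B t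

/-- The rectangle `[x_α, x_{α+K}] × [y_β, y_{β+K}]`. -/
def rect (N K α β : ℕ) : Set (ℝ × ℝ) :=
  Icc (xg N α) (xg N (α + K)) ×ˢ Icc (xg N β) (xg N (β + K))

open Classical in
/-- `Λ_r(α,β) = {(i,j) ∈ Λ_r : D'_{ij} = [x_α, x_{α+K}] × [y_β, y_{β+K}]}`. -/
def LamAB (st : Setup) {m : ℕ} (B : Fin m → Set (ℝ × ℝ)) (r : Fin m) (α β : ℕ) :
    Finset (ℕ × ℕ) :=
  (Lam st B r).filter fun ij => Dij' st.N st.px st.py ij.1 ij.2 = rect st.N st.K α β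

/-- The vertical scaling factors are steady: for each cell, the four corner factors are
all nonnegative or all nonpositive. -/
def Steady (st : Setup) : Prop :=
  ∀ i j, 1 ≤ i → i ≤ st.N → 1 ≤ j → j ≤ st.N →
    (0 ≤ st.s (i - 1) (j - 1) ∧ 0 ≤ st.s (i - 1) j ∧ 0 ≤ st.s i (j - 1) ∧ 0 ≤ st.s i j) ∨
    (st.s (i - 1) (j - 1) ≤ 0 ∧ st.s (i - 1) j ≤ 0 ∧ st.s i (j - 1) ≤ 0 ∧ st.s i j ≤ 0)

/-- The sum `Σ_{(i,j) ∈ Λ_r(α,β)} |S(u_i(x_a), v_j(y_b))|`. -/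
def cSum (st : Setup) {m : ℕ} (B : Fin m → Set (ℝ × ℝ)) (r : Fin m) (α β a b : ℕ) : ℝ :=
  ∑ ij ∈ LamAB st B r α β,
    |st.S (usub st.N st.px ij.1 (xg st.N a), usub st.N st.py ij.2 (xg st.N b))|

/-- The vertical scaling factors have uniform sums `γ_{rt}` under the partition `B`:
whenever `Λ_r ∩ Λ'_t ≠ ∅` and `[x_α, x_{α+K}] × [y_β, y_{β+K}] ∈ {D'_{ij} : (i,j) ∈ Λ_r ∩ Λ'_t}`,
the four corner sums `Σ_{(i,j) ∈ Λ_r(α,β)} |S(u_i(x_a), v_j(y_b))|`,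
`(a,b) ∈ {α, α+K} × {β, β+K}`, all equal `γ_{rt}`. -/
def HasUniformSums (st : Setup) {m : ℕ} (B : Fin m → Set (ℝ × ℝ))
    (γ : Fin m → Fin m → ℝ) : Prop :=
  ∀ r t : Fin m, (Lam st B r ∩ Lam' st B t).Nonempty →
    ∀ α β : ℕ, α + st.K ≤ st.N → β + st.K ≤ st.N →
      (∃ ij ∈ Lam st B r ∩ Lam' st B t,
        Dij' st.N st.px st.py ij.1 ij.2 = rect st.N st.K α β) →
      cSum st B r α β α β = γ r t ∧ cSum st B r α β (α + st.K) β = γ r t ∧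
      cSum st B r α β α (β + st.K) = γ r t ∧ cSum st B r α β (α + st.K) (β + st.K) = γ r t

/-- `γ_{rt} = 0` whenever `Λ_r ∩ Λ'_t = ∅`. -/
def GammaZero (st : Setup) {m : ℕ} (B : Fin m → Set (ℝ × ℝ))
    (γ : Fin m → Fin m → ℝ) : Prop :=
  ∀ r t : Fin m, Lam st B r ∩ Lam' st B t = ∅ → γ r t = 0

/-- There is an `n`-path (for some `n ≥ 1`) from `t` to `r` in the matrix `γ`:
a sequence `i_0 = t, …, i_n = r` with `γ_{i_k, i_{k-1}} > 0` for `k = 1, …, n`. -/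
def IsPathFrom {m : ℕ} (γ : Fin m → Fin m → ℝ) (t r : Fin m) : Prop :=
  ∃ n : ℕ, 1 ≤ n ∧ ∃ c : ℕ → Fin m, c 0 = t ∧ c n = r ∧
    ∀ k, 1 ≤ k → k ≤ n → 0 < γ (c k) (c (k - 1))

/-- `r ∼ t`: there are paths both from `r` to `t` and from `t` to `r`. -/
def Conn {m : ℕ} (γ : Fin m → Fin m → ℝ) (r t : Fin m) : Prop :=
  IsPathFrom γ r t ∧ IsPathFrom γ t r

/-- A connected subset: `r ∼ t` for all `r, t ∈ V`. -/
def IsConnSet {m : ℕ} (γ : Fin m → Fin m → ℝ) (V : Finset (Fin m)) : Prop :=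
  ∀ r ∈ V, ∀ t ∈ V, Conn γ r t

/-- A connected component: a maximal (nonempty) connected subset. -/
def IsConnComp {m : ℕ} (γ : Fin m → Fin m → ℝ) (V : Finset (Fin m)) : Prop :=
  V.Nonempty ∧ IsConnSet γ V ∧ ∀ W : Finset (Fin m), IsConnSet γ W → V ⊆ W → W = V

/-- The spectral radius of a real square matrix: the largest modulus of a (complex)
eigenvalue. -/
def specRad {n : Type*} [Fintype n] [DecidableEq n] (A : Matrix n n ℝ) : ℝ :=
  sSup {x : ℝ | ∃ μ ∈ spectrum ℂ (A.map (algebraMap ℝ ℂ)), x = ‖μ‖}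

/-- The submatrix `G|_V` of `G = (γ_{rt})` indexed by a subset `V`. -/
def subMat {m : ℕ} (γ : Fin m → Fin m → ℝ) (V : Finset (Fin m)) :
    Matrix {x // x ∈ V} {x // x ∈ V} ℝ :=
  fun a b => γ a.1 b.1

/-- `(k,l)` is an ancestor of `(i,j)`: there is a chain `(i,j) = (i_0,j_0), …, (i_n,j_n) = (k,l)`
in `Σ_N × Σ_N` with `D_{i_τ j_τ} ⊆ D'_{i_{τ-1} j_{τ-1}}` for all `τ`. -/
def Ancestor (st : Setup) (i j k l : ℕ) : Prop :=
  ∃ n : ℕ, 1 ≤ n ∧ ∃ c : ℕ → ℕ × ℕ,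
    c 0 = (i, j) ∧ c n = (k, l) ∧
    (∀ τ ≤ n, 1 ≤ (c τ).1 ∧ (c τ).1 ≤ st.N ∧ 1 ≤ (c τ).2 ∧ (c τ).2 ≤ st.N) ∧
    ∀ τ, 1 ≤ τ → τ ≤ n →
      Dij st.N (c τ).1 (c τ).2 ⊆ Dij' st.N st.px st.py (c (τ - 1)).1 (c (τ - 1)).2

/-- `A(i,j) = {(i,j)} ∪ {ancestors of (i,j)}`. -/
def AncSet (st : Setup) (i j : ℕ) : Set (ℕ × ℕ) :=
  {(i, j)} ∪ {kl | Ancestor st i j kl.1 kl.2}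

/-- The pair `(i,j)` is degenerate: every `(k,l) ∈ A(i,j)` has all four vertical scaling
corner factors zero, or `z_{pq} = g_{kl}(x_p, y_q)` for all grid points `(x_p, y_q) ∈ D'_{kl}`. -/
def DegenPair (st : Setup) (i j : ℕ) : Prop :=
  ∀ kl ∈ AncSet st i j,
    (st.s (kl.1 - 1) (kl.2 - 1) = 0 ∧ st.s (kl.1 - 1) kl.2 = 0 ∧
      st.s kl.1 (kl.2 - 1) = 0 ∧ st.s kl.1 kl.2 = 0) ∨
    (∀ p ≤ st.N, ∀ q ≤ st.N, (xg st.N p, xg st.N q) ∈ Dij' st.N st.px st.py kl.1 kl.2 →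
      st.z p q = st.g kl.1 kl.2 (xg st.N p, xg st.N q))

/-- The index `r` is degenerate: every `(i,j) ∈ Λ_r` is degenerate. -/
def DegenIdx (st : Setup) {m : ℕ} (B : Fin m → Set (ℝ × ℝ)) (r : Fin m) : Prop :=
  ∀ ij ∈ Lam st B r, DegenPair st ij.1 ij.2

/-- A set `V` of indices is degenerate: every `r ∈ V` is degenerate. -/
def DegenComp (st : Setup) {m : ℕ} (B : Fin m → Set (ℝ × ℝ)) (V : Finset (Fin m)) : Prop :=
  ∀ r ∈ V, DegenIdx st B r

end RFIS
namespace RFISAux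
open RFIS Set Filter

local notation "SQ" => RFIS.sq
local notation "GR" => RFIS.graphOn

variable {f : ℝ × ℝ → ℝ} {R ε δ : ℝ}

lemma isCompact_sq : IsCompact SQ := isCompact_Icc.prod isCompact_Icc

lemma mem_sq {p : ℝ × ℝ} : p ∈ SQ ↔ (0 ≤ p.1 ∧ p.1 ≤ 1) ∧ (0 ≤ p.2 ∧ p.2 ≤ 1) := by
  simp [RFIS.sq, Set.mem_prod, Set.mem_Icc, Prod.le_def]; tauto

lemma mem_cube {k : ℤ × ℤ × ℤ} {q : ℝ × ℝ × ℝ} :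
    q ∈ cube ε k ↔ ((k.1 : ℝ) * ε ≤ q.1 ∧ q.1 ≤ ((k.1 : ℝ) + 1) * ε)
      ∧ ((k.2.1 : ℝ) * ε ≤ q.2.1 ∧ q.2.1 ≤ ((k.2.1 : ℝ) + 1) * ε)
      ∧ ((k.2.2 : ℝ) * ε ≤ q.2.2 ∧ q.2.2 ≤ ((k.2.2 : ℝ) + 1) * ε) := by
  simp [cube, Set.mem_prod, Set.mem_Icc, Prod.le_def, and_assoc]; tauto

lemma mem_graphOn {q : ℝ × ℝ × ℝ} :
    q ∈ GR f SQ ↔ ∃ p ∈ SQ, q = (p.1, p.2, f p) := by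
  constructor
  · rintro ⟨p, hp, rfl⟩; exact ⟨p, hp, rfl⟩
  · rintro ⟨p, hp, rfl⟩; exact ⟨p, hp, rfl⟩

/-- The set of indices of `ε`-cubes meeting the graph. -/
def idxSet (f : ℝ × ℝ → ℝ) (ε : ℝ) : Set (ℤ × ℤ × ℤ) :=
  {k : ℤ × ℤ × ℤ | (cube ε k ∩ GR f SQ).Nonempty}

lemma Ncubes_eq : Ncubes (GR f SQ) ε = (idxSet f ε).ncard := rfl

lemma idxSet_subset (hε : 0 < ε) (hR : ∀ p ∈ SQ, |f p| ≤ R) :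
    idxSet f ε ⊆ Set.Icc (-1, -1, -⌈R / ε⌉ - 1) (⌈1 / ε⌉, ⌈1 / ε⌉, ⌈R / ε⌉) := by
  rintro ⟨k1, k2, k3⟩ ⟨q, hq, hqE⟩
  rw [mem_graphOn] at hqE
  obtain ⟨p, hp, rfl⟩ := hqE
  rw [mem_cube] at hq
  obtain ⟨⟨h1a, h1b⟩, ⟨h2a, h2b⟩, ⟨h3a, h3b⟩⟩ := hq
  obtain ⟨⟨hx0, hx1⟩, hy0, hy1⟩ := mem_sq.1 hp
  have hfR := hR p hp
  have hRp : 0 ≤ R := le_trans (abs_nonneg _) hfR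
  have e1 : ∀ a : ℤ, ∀ c : ℝ, (a : ℝ) * ε ≤ c → a ≤ ⌈c / ε⌉ := by
    intro a c ha
    have : (a : ℝ) ≤ c / ε := by rw [le_div_iff₀ hε]; exact ha
    exact_mod_cast this.trans (Int.le_ceil _)
  have e2 : ∀ a : ℤ, ∀ c : ℝ, -c ≤ ((a : ℝ) + 1) * ε → -⌈c / ε⌉ - 1 ≤ a := by
    intro a c ha
    have h2 : -(c / ε) ≤ (a : ℝ) + 1 := by
      rw [neg_le]
      rw [le_div_iff₀ hε]; nlinarith
    have h3 : (-⌈c / ε⌉ : ℝ) ≤ (a : ℝ) + 1 :=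
      le_trans (by simpa using neg_le_neg (Int.le_ceil (c / ε))) h2
    have : (-⌈c / ε⌉ - 1 : ℝ) ≤ (a : ℝ) := by linarith
    exact_mod_cast this
  have e2' : ∀ a : ℤ, (0:ℝ) ≤ ((a : ℝ) + 1) * ε → -1 ≤ a := by
    intro a ha
    have : (-1 : ℝ) ≤ (a : ℝ) := by nlinarith
    exact_mod_cast this
  have c1 : (1:ℝ) / ε = 1 / ε := rfl
  simp only [Set.mem_Icc, Prod.le_def]
  refine ⟨⟨e2' _ (le_trans hx0 h1b), e2' _ (le_trans hy0 h2b),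
      e2 _ _ (le_trans (neg_le_of_abs_le hfR) h3b)⟩,
    ⟨e1 _ _ (h1a.trans hx1), e1 _ _ (h2a.trans hy1),
      e1 _ _ (h3a.trans (le_of_abs_le hfR))⟩⟩

lemma idxSet_finite (hε : 0 < ε) (hR : ∀ p ∈ SQ, |f p| ≤ R) : (idxSet f ε).Finite :=
  (Set.finite_Icc _ _).subset (idxSet_subset hε hR)

lemma one_le_Ncubes (hε : 0 < ε) (hR : ∀ p ∈ SQ, |f p| ≤ R) :
    1 ≤ Ncubes (GR f SQ) ε := by
  rw [Ncubes_eq]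
  have hne : (idxSet f ε).Nonempty := by
    refine ⟨(0, 0, ⌊f (0,0) / ε⌋), ⟨((0:ℝ), (0:ℝ), f (0,0)), ?_, ?_⟩⟩
    · rw [mem_cube]
      have h1 : (0:ℝ) ≤ ε := hε.le
      have h2 : (⌊f (0,0) / ε⌋ : ℝ) * ε ≤ f (0,0) := by
        rw [← le_div_iff₀ hε]; exact Int.floor_le _
      have h3 : f (0,0) ≤ ((⌊f (0,0) / ε⌋ : ℝ) + 1) * ε := by
        rw [← div_le_iff₀ hε]; exact (Int.lt_floor_add_one _).le
      simp only []
      norm_num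
      exact ⟨h1, h2, h3⟩
    · exact mem_graphOn.2 ⟨(0,0), mem_sq.2 (by norm_num), rfl⟩
  exact (Set.ncard_pos (idxSet_finite hε hR)).2 hne

end RFISAux
namespace RFISAux
open RFIS Set Filter

local notation "SQ" => RFIS.sq
local notation "GR" => RFIS.graphOn

variable {f : ℝ × ℝ → ℝ} {R ε δ : ℝ}

lemma oscSet_bddAbove (hR : ∀ p ∈ SQ, |f p| ≤ R) {E : Set (ℝ × ℝ)} (hE : E ⊆ SQ) :
    BddAbove {d : ℝ | ∃ p ∈ E, ∃ q ∈ E, d = f p - f q} := by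
  refine ⟨2 * R, ?_⟩
  rintro d ⟨p, hp, q, hq, rfl⟩
  have h1 := hR p (hE hp); have h2 := hR q (hE hq)
  have := abs_le.1 h1; have := abs_le.1 h2
  cases abs_le.1 h1; cases abs_le.1 h2; linarith [abs_le.1 h1, abs_le.1 h2]

lemma osc_nonneg (hR : ∀ p ∈ SQ, |f p| ≤ R) {E : Set (ℝ × ℝ)} (hE : E ⊆ SQ)
    (hne : E.Nonempty) : 0 ≤ Osc f E := by
  obtain ⟨p, hp⟩ := hne
  exact le_csSup (oscSet_bddAbove hR hE) ⟨p, hp, p, hp, (sub_self _).symm⟩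

lemma osc_le_two_R (hR : ∀ p ∈ SQ, |f p| ≤ R) {E : Set (ℝ × ℝ)} (hE : E ⊆ SQ)
    (hne : E.Nonempty) : Osc f E ≤ 2 * R := by
  obtain ⟨p, hp⟩ := hne
  refine csSup_le ⟨0, p, hp, p, hp, (sub_self _).symm⟩ ?_
  rintro d ⟨p', hp', q', hq', rfl⟩
  have h1 := abs_le.1 (hR p' (hE hp')); have h2 := abs_le.1 (hR q' (hE hq'))
  linarith

lemma osc_le_sub (hR : ∀ p ∈ SQ, |f p| ≤ R) {E : Set (ℝ × ℝ)} (hE : E ⊆ SQ)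
    (hne : E.Nonempty) (hEc : IsCompact E) (hf : ContinuousOn f SQ) :
    Osc f E ≤ sSup (f '' E) - sInf (f '' E) := by
  obtain ⟨p, hp⟩ := hne
  have himg : IsCompact (f '' E) := hEc.image_of_continuousOn (hf.mono hE)
  refine csSup_le ⟨0, p, hp, p, hp, (sub_self _).symm⟩ ?_
  rintro d ⟨p', hp', q', hq', rfl⟩
  have h1 : f p' ≤ sSup (f '' E) := le_csSup himg.bddAbove ⟨p', hp', rfl⟩
  have h2 : sInf (f '' E) ≤ f q' := csInf_le himg.bddBelow ⟨q', hq', rfl⟩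
  linarith

lemma sub_le_osc (hR : ∀ p ∈ SQ, |f p| ≤ R) {E F : Set (ℝ × ℝ)} (hE : E ⊆ F) (hF : F ⊆ SQ)
    (hne : E.Nonempty) (hEc : IsCompact E) (hf : ContinuousOn f SQ) :
    sSup (f '' E) - sInf (f '' E) ≤ Osc f F := by
  have himg : IsCompact (f '' E) := hEc.image_of_continuousOn (hf.mono (hE.trans hF))
  have hine : (f '' E).Nonempty := hne.image f
  obtain ⟨p, hp, hpv⟩ := himg.sSup_mem hine
  obtain ⟨q, hq, hqv⟩ := himg.sInf_mem hine
  exact le_csSup (oscSet_bddAbove hR hF) ⟨p, hE hp, q, hE hq, by rw [hpv, hqv]⟩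

/-- Lower bound: `⌊1/ε⌋₊ ^ 2 ≤ N(ε)` for `0 < ε ≤ 1`. -/
lemma grid_le_Ncubes (hR : ∀ p ∈ SQ, |f p| ≤ R) (hε : 0 < ε) (hε1 : ε ≤ 1) :
    (⌊1 / ε⌋₊) ^ 2 ≤ Ncubes (GR f SQ) ε := by
  classical
  set m := ⌊1 / ε⌋₊ with hm
  have hfin := idxSet_finite hε hR
  rw [Ncubes_eq, Set.ncard_eq_toFinset_card _ hfin]
  have key : ∀ b : ℕ × ℕ, b ∈ Finset.range m ×ˢ Finset.range m →
      ((b.1 : ℤ), (b.2 : ℤ), ⌊f ((b.1 : ℝ) * ε, (b.2 : ℝ) * ε) / ε⌋) ∈ hfin.toFinset := by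
    rintro ⟨i, j⟩ hb
    rw [Finset.mem_product, Finset.mem_range, Finset.mem_range] at hb
    have hcoord : ∀ a : ℕ, a < m → 0 ≤ (a : ℝ) * ε ∧ (a : ℝ) * ε ≤ 1 := by
      intro a ha
      constructor
      · positivity
      · have h1 : (a : ℝ) + 1 ≤ m := by exact_mod_cast Nat.succ_le_of_lt ha
        have h2 : (m : ℝ) ≤ 1 / ε := Nat.floor_le (by positivity)
        have := h1.trans h2
        rw [le_div_iff₀ hε] at this
        nlinarith [hε.le]
    obtain ⟨hi0, hi1⟩ := hcoord i hb.1
    obtain ⟨hj0, hj1⟩ := hcoord j hb.2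
    set p : ℝ × ℝ := ((i : ℝ) * ε, (j : ℝ) * ε) with hp
    have hpsq : p ∈ SQ := mem_sq.2 ⟨⟨hi0, hi1⟩, hj0, hj1⟩
    rw [Set.Finite.mem_toFinset]
    refine ⟨(p.1, p.2, f p), mem_cube.2 ⟨⟨le_refl _, ?_⟩, ⟨le_refl _, ?_⟩, ?_, ?_⟩,
      mem_graphOn.2 ⟨p, hpsq, rfl⟩⟩
    · have : ((i:ℤ):ℝ) = (i:ℝ) := by push_cast; ring
      rw [this]; show (i:ℝ) * ε ≤ ((i:ℝ) + 1) * ε; nlinarith [hε.le]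
    · have : ((j:ℤ):ℝ) = (j:ℝ) := by push_cast; ring
      rw [this]; show (j:ℝ) * ε ≤ ((j:ℝ) + 1) * ε; nlinarith [hε.le]
    · rw [← le_div_iff₀ hε]; exact Int.floor_le _
    · rw [← div_le_iff₀ hε]; exact (Int.lt_floor_add_one _).le
  have hinj : Set.InjOn (fun b : ℕ × ℕ =>
      ((b.1 : ℤ), (b.2 : ℤ), ⌊f ((b.1 : ℝ) * ε, (b.2 : ℝ) * ε) / ε⌋))
      ↑(Finset.range m ×ˢ Finset.range m) := by
    rintro ⟨i, j⟩ _ ⟨i', j'⟩ _ h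
    simp only [Prod.mk.injEq] at h
    obtain ⟨h1, h2, -⟩ := h
    exact Prod.ext (by exact_mod_cast h1) (by exact_mod_cast h2)
  have := Finset.card_le_card_of_injOn _ key hinj
  simpa [Finset.card_product, pow_two] using this

/-- Two-scale comparison: if `δ ≤ ε` then `N(ε) ≤ 27 N(δ)`. -/
lemma Ncubes_scale (hR : ∀ p ∈ SQ, |f p| ≤ R) (hδ : 0 < δ) (hδε : δ ≤ ε) :
    Ncubes (GR f SQ) ε ≤ 27 * Ncubes (GR f SQ) δ := by
  classical
  have hε : 0 < ε := hδ.trans_le hδε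
  have hfinε := idxSet_finite hε hR
  have hfinδ := idxSet_finite hδ hR
  rw [Ncubes_eq, Ncubes_eq, Set.ncard_eq_toFinset_card _ hfinε,
    Set.ncard_eq_toFinset_card _ hfinδ]
  set φ : ℤ × ℤ × ℤ → ℤ × ℤ × ℤ := fun k =>
    if h : (cube ε k ∩ GR f SQ).Nonempty then
      (⌊h.some.1 / δ⌋, ⌊h.some.2.1 / δ⌋, ⌊h.some.2.2 / δ⌋) else 0 with hφ
  have hmaps : ∀ k ∈ hfinε.toFinset, φ k ∈ hfinδ.toFinset := by
    intro k hk
    rw [Set.Finite.mem_toFinset] at hk ⊢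
    have hk' : (cube ε k ∩ GR f SQ).Nonempty := hk
    have hφk : φ k = (⌊hk'.some.1 / δ⌋, ⌊hk'.some.2.1 / δ⌋, ⌊hk'.some.2.2 / δ⌋) := by
      rw [hφ]; exact dif_pos hk'
    rw [hφk]
    refine ⟨hk'.some, mem_cube.2 ⟨⟨?_, ?_⟩, ⟨?_, ?_⟩, ?_, ?_⟩, hk'.some_mem.2⟩ <;>
      first
        | (rw [← le_div_iff₀ hδ]; exact Int.floor_le _)
        | (rw [← div_le_iff₀ hδ]; exact (Int.lt_floor_add_one _).le)
  rw [Finset.card_eq_sum_card_fiberwise hmaps]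
  have hfib : ∀ b ∈ hfinδ.toFinset,
      (hfinε.toFinset.filter fun k => φ k = b).card ≤ 27 := by
    intro b _
    have hsub : (hfinε.toFinset.filter fun k => φ k = b) ⊆
        Finset.Icc (⌈(b.1 : ℝ) * δ / ε⌉ - 1) (⌈(b.1 : ℝ) * δ / ε⌉ + 1) ×ˢ
          (Finset.Icc (⌈(b.2.1 : ℝ) * δ / ε⌉ - 1) (⌈(b.2.1 : ℝ) * δ / ε⌉ + 1) ×ˢ
            Finset.Icc (⌈(b.2.2 : ℝ) * δ / ε⌉ - 1) (⌈(b.2.2 : ℝ) * δ / ε⌉ + 1)) := by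
      intro k hk
      rw [Finset.mem_filter, Set.Finite.mem_toFinset] at hk
      obtain ⟨hkS, hkb⟩ := hk
      have hkS' : (cube ε k ∩ GR f SQ).Nonempty := hkS
      have hφk : φ k = (⌊hkS'.some.1 / δ⌋, ⌊hkS'.some.2.1 / δ⌋, ⌊hkS'.some.2.2 / δ⌋) := by
        rw [hφ]; exact dif_pos hkS'
      rw [hφk] at hkb
      subst hkb
      set q := hkS'.some with hq
      have hqc : q ∈ cube ε k := hkS'.some_mem.1
      rw [mem_cube] at hqc
      have key : ∀ a c : ℤ, ∀ x : ℝ, (a : ℝ) * ε ≤ x → x ≤ ((a : ℝ) + 1) * ε →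
          c = ⌊x / δ⌋ → a ∈ Finset.Icc (⌈(c : ℝ) * δ / ε⌉ - 1) (⌈(c : ℝ) * δ / ε⌉ + 1) := by
        intro a c x h1 h2 hc
        subst hc
        have hf1 : (⌊x / δ⌋ : ℝ) ≤ x / δ := Int.floor_le _
        have hf2 : x / δ < (⌊x / δ⌋ : ℝ) + 1 := Int.lt_floor_add_one _
        rw [Finset.mem_Icc]
        have hc1 : (⌊x / δ⌋ : ℝ) * δ / ε ≤ ⌈(⌊x / δ⌋ : ℝ) * δ / ε⌉ := Int.le_ceil _
        have hc2 : (⌈(⌊x / δ⌋ : ℝ) * δ / ε⌉ : ℝ) < (⌊x / δ⌋ : ℝ) * δ / ε + 1 :=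
          Int.ceil_lt_add_one _
      -- a*ε ≤ x ≤ (⌊x/δ⌋+1)δ  and  ⌊x/δ⌋δ ≤ x ≤ (a+1)ε
        have hx1 : x ≤ ((⌊x / δ⌋ : ℝ) + 1) * δ := by
          rw [← div_le_iff₀ hδ]; exact hf2.le
        have hx2 : (⌊x / δ⌋ : ℝ) * δ ≤ x := by
          rw [← le_div_iff₀ hδ]; exact hf1
        constructor
        · -- ⌈cδ/ε⌉ - 1 ≤ a
          have : (⌊x / δ⌋ : ℝ) * δ / ε ≤ (a : ℝ) + 1 := by
            rw [div_le_iff₀ hε]; nlinarith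
          have h3 : (⌈(⌊x / δ⌋ : ℝ) * δ / ε⌉ : ℤ) ≤ a + 1 := Int.ceil_le.2 (by exact_mod_cast this)
          omega
        · -- a ≤ ⌈cδ/ε⌉ + 1
          have : (a : ℝ) ≤ (⌊x / δ⌋ : ℝ) * δ / ε + 1 := by
            rw [div_add' _ _ _ hε.ne', le_div_iff₀ hε]; nlinarith
          have h3 : (a : ℝ) ≤ (⌈(⌊x / δ⌋ : ℝ) * δ / ε⌉ : ℝ) + 1 := by linarith
          exact_mod_cast h3
      obtain ⟨⟨h1a, h1b⟩, ⟨h2a, h2b⟩, h3a, h3b⟩ := hqc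
      have e1 := key k.1 _ q.1 h1a h1b rfl
      have e2 := key k.2.1 _ q.2.1 h2a h2b rfl
      have e3 := key k.2.2 _ q.2.2 h3a h3b rfl
      rw [Finset.mem_product, Finset.mem_product]
      exact ⟨e1, e2, e3⟩
    have := Finset.card_le_card hsub
    have hc : ∀ a : ℤ, (Finset.Icc (a - 1) (a + 1)).card = 3 := by
      intro a; rw [Int.card_Icc]; omega
    simpa [Finset.card_product, hc] using this
  calc ∑ b ∈ hfinδ.toFinset, (hfinε.toFinset.filter fun k => φ k = b).card
      ≤ ∑ _b ∈ hfinδ.toFinset, 27 := Finset.sum_le_sum hfib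
    _ = hfinδ.toFinset.card * 27 := by rw [Finset.sum_const, smul_eq_mul]
    _ = 27 * hfinδ.toFinset.card := by ring

end RFISAux
namespace RFISAux
open RFIS Set Filter

local notation "SQ" => RFIS.sq
local notation "GR" => RFIS.graphOn

variable {f : ℝ × ℝ → ℝ} {R : ℝ}

section Counting

variable {N K n : ℕ}

lemma W_pos (hN : 1 ≤ N) (hK : 1 ≤ K) (n : ℕ) : (0:ℝ) < (K:ℝ) ^ n * (N:ℝ) := by
  have h1 : (0:ℝ) < (K:ℝ) := by exact_mod_cast Nat.lt_of_lt_of_le Nat.zero_lt_one hK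
  have h2 : (0:ℝ) < (N:ℝ) := by exact_mod_cast Nat.lt_of_lt_of_le Nat.zero_lt_one hN
  positivity

lemma mem_Dn {k l : ℕ} {p : ℝ × ℝ} :
    p ∈ Dn N K n k l ↔
      (((k:ℝ) - 1) / ((K:ℝ) ^ n * (N:ℝ)) ≤ p.1 ∧ p.1 ≤ (k:ℝ) / ((K:ℝ) ^ n * (N:ℝ))) ∧
      (((l:ℝ) - 1) / ((K:ℝ) ^ n * (N:ℝ)) ≤ p.2 ∧ p.2 ≤ (l:ℝ) / ((K:ℝ) ^ n * (N:ℝ))) := by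
  simp [Dn, Set.mem_prod, Set.mem_Icc, Prod.le_def]; tauto

lemma Dn_subset_sq {k l : ℕ} (hN : 1 ≤ N) (hK : 1 ≤ K)
    (hk1 : 1 ≤ k) (hk2 : k ≤ K ^ n * N) (hl1 : 1 ≤ l) (hl2 : l ≤ K ^ n * N) :
    Dn N K n k l ⊆ SQ := by
  have hW := W_pos hN hK n
  intro p hp
  rw [mem_Dn] at hp
  obtain ⟨⟨h1, h2⟩, h3, h4⟩ := hp
  have hMW : ((K ^ n * N : ℕ) : ℝ) = (K:ℝ) ^ n * (N:ℝ) := by push_cast; ring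
  have bd : ∀ a : ℕ, 1 ≤ a → a ≤ K ^ n * N →
      0 ≤ ((a:ℝ) - 1) / ((K:ℝ) ^ n * (N:ℝ)) ∧ (a:ℝ) / ((K:ℝ) ^ n * (N:ℝ)) ≤ 1 := by
    intro a ha1 ha2
    have h1 : (1:ℝ) ≤ (a:ℝ) := by exact_mod_cast ha1
    have h2 : (a:ℝ) ≤ (K:ℝ) ^ n * (N:ℝ) := by rw [← hMW]; exact_mod_cast ha2
    constructor
    · apply div_nonneg (by linarith) hW.le
    · rw [div_le_one hW]; exact h2
  obtain ⟨e1, e2⟩ := bd k hk1 hk2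
  obtain ⟨e3, e4⟩ := bd l hl1 hl2
  exact mem_sq.2 ⟨⟨le_trans e1 h1, le_trans h2 e2⟩, le_trans e3 h3, le_trans h4 e4⟩

lemma Dn_nonempty {k l : ℕ} (hN : 1 ≤ N) (hK : 1 ≤ K) (hk1 : 1 ≤ k) (hl1 : 1 ≤ l) :
    (Dn N K n k l).Nonempty := by
  have hW := W_pos hN hK n
  refine ⟨(((k:ℝ) - 1) / ((K:ℝ) ^ n * (N:ℝ)), ((l:ℝ) - 1) / ((K:ℝ) ^ n * (N:ℝ))), ?_⟩
  rw [mem_Dn]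
  have h : ∀ a : ℕ, ((a:ℝ) - 1) / ((K:ℝ) ^ n * (N:ℝ)) ≤ (a:ℝ) / ((K:ℝ) ^ n * (N:ℝ)) := by
    intro a
    exact (div_le_div_iff_of_pos_right hW).2 (by linarith)
  exact ⟨⟨le_refl _, h k⟩, le_refl _, h l⟩

/-- Lower oscillation count at scale `ε = 1/(KⁿN)`. -/
lemma oscsum_le_Ncubes (hf : ContinuousOn f SQ) (hR : ∀ p ∈ SQ, |f p| ≤ R)
    (hN : 1 ≤ N) (hK : 1 ≤ K) (n : ℕ) :
    ((K ^ n * N : ℕ) : ℝ) * OscSum f N K n SQ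
      ≤ (Ncubes (GR f SQ) (((K : ℝ) ^ n * (N : ℝ))⁻¹) : ℝ) := by
  classical
  have hW : (0:ℝ) < (K:ℝ) ^ n * (N:ℝ) := W_pos hN hK n
  set W : ℝ := (K:ℝ) ^ n * (N:ℝ) with hWdef
  have hMW : ((K ^ n * N : ℕ) : ℝ) = W := by rw [hWdef]; push_cast; ring
  have hε : (0:ℝ) < W⁻¹ := by positivity
  set M : ℕ := K ^ n * N with hMdef
  have hfin := idxSet_finite (f := f) (R := R) hε hR
  rw [Ncubes_eq, Set.ncard_eq_toFinset_card _ hfin]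
  set base : Finset (ℕ × ℕ) := Finset.Icc 1 M ×ˢ Finset.Icc 1 M with hbase
  set lo : ℕ × ℕ → ℤ := fun b => ⌈sInf (f '' Dn N K n b.1 b.2) * W⌉ - 1 with hlo
  set hi : ℕ × ℕ → ℤ := fun b => ⌊sSup (f '' Dn N K n b.1 b.2) * W⌋ with hhi
  -- facts about each cell
  have cellfacts : ∀ b : ℕ × ℕ, b ∈ base →
      Dn N K n b.1 b.2 ⊆ SQ ∧ (Dn N K n b.1 b.2).Nonempty ∧
        IsCompact (Dn N K n b.1 b.2) ∧ IsPreconnected (Dn N K n b.1 b.2) := by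
    rintro ⟨k, l⟩ hb
    rw [hbase, Finset.mem_product, Finset.mem_Icc, Finset.mem_Icc] at hb
    exact ⟨Dn_subset_sq hN hK hb.1.1 hb.1.2 hb.2.1 hb.2.2,
      Dn_nonempty hN hK hb.1.1 hb.2.1,
      isCompact_Icc.prod isCompact_Icc,
      ((convex_Icc _ _).prod (convex_Icc _ _)).isPreconnected⟩
  have key : ∀ s ∈ base.sigma (fun b => Finset.Icc (lo b) (hi b)),
      ((((s.1.1 : ℤ) - 1, (s.1.2 : ℤ) - 1, s.2)) : ℤ × ℤ × ℤ) ∈ hfin.toFinset := by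
    rintro ⟨b, j⟩ hs
    rw [Finset.mem_sigma] at hs
    obtain ⟨hb, hj⟩ := hs
    rw [Finset.mem_Icc] at hj
    simp only [hlo, hhi] at hj
    obtain ⟨hDsq, hDne, hDc, hDpc⟩ := cellfacts b hb
    have himgc : IsCompact (f '' Dn N K n b.1 b.2) :=
      hDc.image_of_continuousOn (hf.mono hDsq)
    have himgne : (f '' Dn N K n b.1 b.2).Nonempty := hDne.image f
    set mI : ℝ := sInf (f '' Dn N K n b.1 b.2) with hmI
    set MI : ℝ := sSup (f '' Dn N K n b.1 b.2) with hMI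
    have hmle : mI ≤ MI := csInf_le_csSup himgne himgc.bddBelow himgc.bddAbove
    set y : ℝ := max mI ((j : ℝ) * W⁻¹) with hy
    have hjW : (j : ℝ) * W⁻¹ ≤ MI := by
      have h1 : (j : ℝ) ≤ MI * W := Int.le_floor.1 hj.2
      calc (j : ℝ) * W⁻¹ ≤ (MI * W) * W⁻¹ := by
            exact mul_le_mul_of_nonneg_right h1 hε.le
        _ = MI := by field_simp
    have hymem : y ∈ Set.Icc mI MI := ⟨le_max_left _ _, max_le hmle hjW⟩
    have hicc : Set.Icc mI MI ⊆ f '' Dn N K n b.1 b.2 :=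
      (hDpc.image f (hf.mono hDsq)).Icc_subset (himgc.sInf_mem himgne) (himgc.sSup_mem himgne)
    obtain ⟨p, hpD, hpy⟩ := hicc hymem
    rw [Set.Finite.mem_toFinset]
    have hpDn := mem_Dn.1 hpD
    refine ⟨(p.1, p.2, f p), mem_cube.2 ⟨⟨?_, ?_⟩, ⟨?_, ?_⟩, ?_, ?_⟩,
      mem_graphOn.2 ⟨p, hDsq hpD, rfl⟩⟩
    · have : (((b.1 : ℤ) - 1 : ℤ) : ℝ) * W⁻¹ = ((b.1 : ℝ) - 1) / W := by
        push_cast; rw [div_eq_mul_inv]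
      rw [this]; exact hpDn.1.1
    · have : ((((b.1 : ℤ) - 1 : ℤ) : ℝ) + 1) * W⁻¹ = (b.1 : ℝ) / W := by
        push_cast; rw [div_eq_mul_inv]; ring
      rw [this]; exact hpDn.1.2
    · have : (((b.2 : ℤ) - 1 : ℤ) : ℝ) * W⁻¹ = ((b.2 : ℝ) - 1) / W := by
        push_cast; rw [div_eq_mul_inv]
      rw [this]; exact hpDn.2.1
    · have : ((((b.2 : ℤ) - 1 : ℤ) : ℝ) + 1) * W⁻¹ = (b.2 : ℝ) / W := by
        push_cast; rw [div_eq_mul_inv]; ring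
      rw [this]; exact hpDn.2.2
    · rw [hpy]; exact le_max_right _ _
    · rw [hpy, hy]
      apply max_le
      · have h1 : (⌈mI * W⌉ : ℤ) ≤ j + 1 := by
          have := hj.1; omega
        have h2 : mI * W ≤ ((j : ℝ) + 1) := by
          calc mI * W ≤ ((⌈mI * W⌉ : ℤ) : ℝ) := Int.le_ceil _
          _ ≤ ((j + 1 : ℤ) : ℝ) := by exact_mod_cast h1
          _ = (j : ℝ) + 1 := by push_cast; ring
        calc mI = mI * W * W⁻¹ := by field_simp
        _ ≤ ((j : ℝ) + 1) * W⁻¹ := mul_le_mul_of_nonneg_right h2 hε.le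
      · exact mul_le_mul_of_nonneg_right (by linarith) hε.le
  have hinj : Set.InjOn (fun s : Σ _ : ℕ × ℕ, ℤ => (((s.1.1 : ℤ) - 1, (s.1.2 : ℤ) - 1, s.2)))
      ↑(base.sigma (fun b => Finset.Icc (lo b) (hi b))) := by
    rintro ⟨⟨k, l⟩, j⟩ _ ⟨⟨k', l'⟩, j'⟩ _ h
    simp only [Prod.mk.injEq] at h
    obtain ⟨h1, h2, h3⟩ := h
    have hk : k = k' := by omega
    have hl : l = l' := by omega
    subst hk; subst hl; subst h3; rfl
  have hcard := Finset.card_le_card_of_injOn _ key hinj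
  rw [Finset.card_sigma] at hcard
  -- per-cell estimate
  have percell : ∀ b ∈ base,
      W * Osc f (Dn N K n b.1 b.2) ≤ ((Finset.Icc (lo b) (hi b)).card : ℝ) := by
    intro b hb
    obtain ⟨hDsq, hDne, hDc, hDpc⟩ := cellfacts b hb
    set mI : ℝ := sInf (f '' Dn N K n b.1 b.2) with hmI
    set MI : ℝ := sSup (f '' Dn N K n b.1 b.2) with hMI
    have hosc : Osc f (Dn N K n b.1 b.2) ≤ MI - mI := osc_le_sub hR hDsq hDne hDc hf
    have hoscnn : 0 ≤ Osc f (Dn N K n b.1 b.2) := osc_nonneg hR hDsq hDne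
    have hcI : ((Finset.Icc (lo b) (hi b)).card : ℝ) = ((hi b + 1 - lo b).toNat : ℝ) := by
      rw [Int.card_Icc]
    rw [hcI]
    have h1 : ((hi b + 1 - lo b : ℤ) : ℝ) ≤ ((hi b + 1 - lo b).toNat : ℝ) := by
      exact_mod_cast Int.self_le_toNat _
    have h2 : MI * W - 1 ≤ ((hi b : ℤ) : ℝ) := by
      simp only [hhi]
      rw [← hMI]
      linarith [Int.lt_floor_add_one (MI * W)]
    have h3 : ((lo b : ℤ) : ℝ) ≤ mI * W := by
      simp only [hlo]
      rw [← hmI]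
      push_cast
      linarith [Int.ceil_lt_add_one (mI * W)]
    have h4 : W * (MI - mI) ≤ ((hi b + 1 - lo b : ℤ) : ℝ) := by push_cast; nlinarith
    calc W * Osc f (Dn N K n b.1 b.2) ≤ W * (MI - mI) :=
          mul_le_mul_of_nonneg_left hosc hW.le
      _ ≤ ((hi b + 1 - lo b : ℤ) : ℝ) := h4
      _ ≤ _ := h1
  -- rewrite OscSum as a sum over base
  have hOsc_eq : OscSum f N K n SQ = ∑ b ∈ base, Osc f (Dn N K n b.1 b.2) := by
    rw [OscSum, ← Finset.sum_product']
    apply Finset.sum_congr rfl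
    rintro ⟨k, l⟩ hb
    rw [Finset.mem_product, Finset.mem_Icc, Finset.mem_Icc] at hb
    exact if_pos (Dn_subset_sq hN hK hb.1.1 hb.1.2 hb.2.1 hb.2.2)
  rw [hMW, hOsc_eq, Finset.mul_sum]
  calc ∑ b ∈ base, W * Osc f (Dn N K n b.1 b.2)
      ≤ ∑ b ∈ base, ((Finset.Icc (lo b) (hi b)).card : ℝ) := Finset.sum_le_sum percell
    _ = ((∑ b ∈ base, (Finset.Icc (lo b) (hi b)).card : ℕ) : ℝ) := by push_cast; ring
    _ ≤ (hfin.toFinset.card : ℝ) := by exact_mod_cast hcard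

end Counting
end RFISAux
namespace RFISAux
open RFIS Set Filter

local notation "SQ" => RFIS.sq
local notation "GR" => RFIS.graphOn

variable {f : ℝ × ℝ → ℝ} {R : ℝ} {N K : ℕ}

lemma oscsum_eq (hN : 1 ≤ N) (hK : 1 ≤ K) (n : ℕ) :
    OscSum f N K n SQ =
      ∑ b ∈ Finset.Icc 1 (K ^ n * N) ×ˢ Finset.Icc 1 (K ^ n * N), Osc f (Dn N K n b.1 b.2) := by
  classical
  rw [OscSum, ← Finset.sum_product']
  apply Finset.sum_congr rfl
  rintro ⟨k, l⟩ hb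
  rw [Finset.mem_product, Finset.mem_Icc, Finset.mem_Icc] at hb
  exact if_pos (Dn_subset_sq hN hK hb.1.1 hb.1.2 hb.2.1 hb.2.2)

lemma oscsum_nonneg (hR : ∀ p ∈ SQ, |f p| ≤ R) (hN : 1 ≤ N) (hK : 1 ≤ K) (n : ℕ) :
    0 ≤ OscSum f N K n SQ := by
  rw [oscsum_eq hN hK n]
  apply Finset.sum_nonneg
  rintro ⟨k, l⟩ hb
  rw [Finset.mem_product, Finset.mem_Icc, Finset.mem_Icc] at hb
  exact osc_nonneg hR (Dn_subset_sq hN hK hb.1.1 hb.1.2 hb.2.1 hb.2.2)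
    (Dn_nonempty hN hK hb.1.1 hb.2.1)

lemma oscsum_le (hR : ∀ p ∈ SQ, |f p| ≤ R) (hN : 1 ≤ N) (hK : 1 ≤ K) (n : ℕ) :
    OscSum f N K n SQ ≤ 2 * R * ((K ^ n * N : ℕ) : ℝ) ^ 2 := by
  rw [oscsum_eq hN hK n]
  have h1 : ∀ b ∈ Finset.Icc 1 (K ^ n * N) ×ˢ Finset.Icc 1 (K ^ n * N),
      Osc f (Dn N K n b.1 b.2) ≤ 2 * R := by
    rintro ⟨k, l⟩ hb
    rw [Finset.mem_product, Finset.mem_Icc, Finset.mem_Icc] at hb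
    exact osc_le_two_R hR (Dn_subset_sq hN hK hb.1.1 hb.1.2 hb.2.1 hb.2.2)
      (Dn_nonempty hN hK hb.1.1 hb.2.1)
  calc ∑ b ∈ Finset.Icc 1 (K ^ n * N) ×ˢ Finset.Icc 1 (K ^ n * N), Osc f (Dn N K n b.1 b.2)
      ≤ ∑ _b ∈ Finset.Icc 1 (K ^ n * N) ×ˢ Finset.Icc 1 (K ^ n * N), 2 * R :=
        Finset.sum_le_sum h1
    _ = ((K ^ n * N) * (K ^ n * N) : ℕ) • (2 * R) := by
        rw [Finset.sum_const, Finset.card_product, Nat.card_Icc]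
        norm_num
    _ ≤ 2 * R * ((K ^ n * N : ℕ) : ℝ) ^ 2 := by
        rw [nsmul_eq_mul]; exact le_of_eq (by push_cast; ring)

set_option maxHeartbeats 1000000 in
/-- Upper oscillation count at scale `ε = 1/(KⁿN)`. -/
lemma Ncubes_le_oscsum (hf : ContinuousOn f SQ) (hR : ∀ p ∈ SQ, |f p| ≤ R) (hR1 : 1 ≤ R)
    (hN : 1 ≤ N) (hK : 1 ≤ K) (n : ℕ) :
    (Ncubes (GR f SQ) (((K : ℝ) ^ n * (N : ℝ))⁻¹) : ℝ)
      ≤ 34 * R * ((K ^ n * N : ℕ) : ℝ) * (OscSum f N K n SQ + 2 * ((K ^ n * N : ℕ) : ℝ)) := by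
  classical
  set M : ℕ := K ^ n * N with hMdef
  have hWcast : ((M : ℕ) : ℝ) = (K:ℝ) ^ n * (N:ℝ) := by rw [hMdef]; push_cast; ring
  rw [show (((K:ℝ) ^ n * (N:ℝ))⁻¹) = (((M : ℕ) : ℝ))⁻¹ by rw [hWcast]]
  set W : ℝ := ((M : ℕ) : ℝ) with hWdef
  have hW : (0:ℝ) < W := by rw [hWcast]; exact W_pos hN hK n
  have hMW : ((M : ℕ) : ℝ) = W := rfl
  have hM1 : 1 ≤ M := by
    rw [hMdef]; exact Nat.one_le_iff_ne_zero.2 (Nat.mul_pos (pow_pos hK n) hN).ne'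
  have hε : (0:ℝ) < W⁻¹ := by positivity
  have hfin := idxSet_finite (f := f) (R := R) hε hR
  rw [Ncubes_eq, Set.ncard_eq_toFinset_card _ hfin]
  set boxF : Finset (ℤ × ℤ) := Finset.Icc (-1 : ℤ) (M : ℤ) ×ˢ Finset.Icc (-1 : ℤ) (M : ℤ)
    with hboxF
  have hmaps : ∀ k ∈ hfin.toFinset, ((k.1, k.2.1) : ℤ × ℤ) ∈ boxF := by
    intro k hk
    rw [Set.Finite.mem_toFinset] at hk
    obtain ⟨q, hqc, hqE⟩ := hk
    obtain ⟨p, hp, rfl⟩ := mem_graphOn.1 hqE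
    rw [mem_cube] at hqc
    obtain ⟨⟨h1a, h1b⟩, ⟨h2a, h2b⟩, -⟩ := hqc
    obtain ⟨⟨hx0, hx1⟩, hy0, hy1⟩ := mem_sq.1 hp
    rw [hboxF, Finset.mem_product, Finset.mem_Icc, Finset.mem_Icc]
    have key : ∀ a : ℤ, ∀ x : ℝ, (a:ℝ) * W⁻¹ ≤ x → x ≤ ((a:ℝ)+1) * W⁻¹ →
        0 ≤ x → x ≤ 1 → -1 ≤ a ∧ a ≤ (M:ℤ) := by
      intro a x e1 e2 e3 e4
      constructor
      · have : (0:ℝ) ≤ ((a:ℝ)+1) * W⁻¹ := le_trans e3 e2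
        have : (-1:ℝ) ≤ (a:ℝ) := by nlinarith
        exact_mod_cast this
      · have h5 : (a:ℝ) * W⁻¹ ≤ 1 := le_trans e1 e4
        have h6 : (a:ℝ) ≤ W := by
          have h7 := mul_le_mul_of_nonneg_right h5 hW.le
          rwa [one_mul, mul_assoc, inv_mul_cancel₀ hW.ne', mul_one] at h7
        have : (a:ℝ) ≤ ((M:ℤ):ℝ) := by rw [← hMW] at h6; exact_mod_cast h6
        exact_mod_cast this
    obtain ⟨e1, e2⟩ := key k.1 p.1 h1a h1b hx0 hx1
    obtain ⟨e3, e4⟩ := key k.2.1 p.2 h2a h2b hy0 hy1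
    exact ⟨⟨e1, e2⟩, e3, e4⟩
  have hsum := Finset.card_eq_sum_card_fiberwise hmaps
  set core : Finset (ℤ × ℤ) := Finset.Icc (0 : ℤ) ((M:ℤ) - 1) ×ˢ Finset.Icc (0 : ℤ) ((M:ℤ) - 1)
    with hcore
  have hcoresub : core ⊆ boxF := by
    rw [hcore, hboxF]
    exact Finset.product_subset_product (Finset.Icc_subset_Icc (by omega) (by omega))
      (Finset.Icc_subset_Icc (by omega) (by omega))
  -- the fiber bound
  have hfib : ∀ b ∈ boxF,
      ((hfin.toFinset.filter fun k : ℤ × ℤ × ℤ => ((k.1, k.2.1) : ℤ × ℤ) = b).card : ℝ) ≤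
        (if b ∈ core then Osc f (Dn N K n (b.1 + 1).toNat (b.2 + 1).toNat) else 2 * R) * W
          + 2 := by
    intro b _
    have hRHS0 : 0 ≤ (if b ∈ core then Osc f (Dn N K n (b.1 + 1).toNat (b.2 + 1).toNat)
        else 2 * R) * W + 2 := by
      have : 0 ≤ (if b ∈ core then Osc f (Dn N K n (b.1 + 1).toNat (b.2 + 1).toNat)
          else 2 * R) := by
        split_ifs with hc
        · rw [hcore, Finset.mem_product, Finset.mem_Icc, Finset.mem_Icc] at hc
          have hk1 : 1 ≤ (b.1 + 1).toNat := by omega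
          have hk2 : (b.1 + 1).toNat ≤ M := by omega
          have hl1 : 1 ≤ (b.2 + 1).toNat := by omega
          have hl2 : (b.2 + 1).toNat ≤ M := by omega
          exact osc_nonneg hR (Dn_subset_sq hN hK hk1 (hMdef ▸ hk2) hl1 (hMdef ▸ hl2))
            (Dn_nonempty hN hK hk1 hl1)
        · linarith
      nlinarith
    by_cases hne : (hfin.toFinset.filter fun k : ℤ × ℤ × ℤ => ((k.1, k.2.1) : ℤ × ℤ) = b).Nonempty
    swap
    · rw [Finset.not_nonempty_iff_eq_empty] at hne
      rw [hne]; simpa using hRHS0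
    -- witnesses
    have hwit : ∀ k ∈ hfin.toFinset.filter fun k : ℤ × ℤ × ℤ => ((k.1, k.2.1) : ℤ × ℤ) = b,
        ∃ p : ℝ × ℝ, (p ∈ SQ ∧ p ∈ Icc ((b.1:ℝ) * W⁻¹) (((b.1:ℝ)+1) * W⁻¹) ×ˢ
            Icc ((b.2:ℝ) * W⁻¹) (((b.2:ℝ)+1) * W⁻¹)) ∧
          (k.2.2 : ℝ) * W⁻¹ ≤ f p ∧ f p ≤ ((k.2.2 : ℝ) + 1) * W⁻¹ := by
      intro k hk
      rw [Finset.mem_filter, Set.Finite.mem_toFinset] at hk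
      obtain ⟨⟨q, hqc, hqE⟩, hkb⟩ := hk
      obtain ⟨p, hp, rfl⟩ := mem_graphOn.1 hqE
      rw [mem_cube] at hqc
      obtain ⟨⟨h1a, h1b⟩, ⟨h2a, h2b⟩, h3a, h3b⟩ := hqc
      rw [Prod.mk.injEq] at hkb
      refine ⟨p, ⟨hp, ?_, ?_⟩, h3a, h3b⟩
      · rw [Set.mem_Icc]; rw [← hkb.1]; exact ⟨h1a, h1b⟩
      · rw [Set.mem_Icc]; rw [← hkb.2]; exact ⟨h2a, h2b⟩
    set D' : Set (ℝ × ℝ) := SQ ∩ (Icc ((b.1:ℝ) * W⁻¹) (((b.1:ℝ)+1) * W⁻¹) ×ˢ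
      Icc ((b.2:ℝ) * W⁻¹) (((b.2:ℝ)+1) * W⁻¹)) with hD'
    have hD'sq : D' ⊆ SQ := Set.inter_subset_left
    have hD'c : IsCompact D' := isCompact_sq.inter_right (isClosed_Icc.prod isClosed_Icc)
    obtain ⟨k0, hk0⟩ := hne
    have hD'ne : D'.Nonempty := by
      obtain ⟨p, hp, -⟩ := hwit k0 hk0
      exact ⟨p, hp.1, hp.2⟩
    have himgc : IsCompact (f '' D') := hD'c.image_of_continuousOn (hf.mono hD'sq)
    have himgne : (f '' D').Nonempty := hD'ne.image f
    set mI : ℝ := sInf (f '' D') with hmI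
    set MI : ℝ := sSup (f '' D') with hMI
    have hmle : mI ≤ MI := csInf_le_csSup himgne himgc.bddBelow himgc.bddAbove
    have hcard : (hfin.toFinset.filter fun k : ℤ × ℤ × ℤ => ((k.1, k.2.1) : ℤ × ℤ) = b).card ≤
        (Finset.Icc (⌈mI * W⌉ - 1) ⌊MI * W⌋).card := by
      apply Finset.card_le_card_of_injOn (fun k => k.2.2)
      · intro k hk
        obtain ⟨p, hpD, hf1, hf2⟩ := hwit k hk
        have hfmem : f p ∈ f '' D' := ⟨p, ⟨hpD.1, hpD.2⟩, rfl⟩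
        have e1 : mI ≤ f p := csInf_le himgc.bddBelow hfmem
        have e2 : f p ≤ MI := le_csSup himgc.bddAbove hfmem
        rw [Finset.mem_coe, Finset.mem_Icc]
        beta_reduce
        constructor
        · have h3 : mI * W ≤ (k.2.2 : ℝ) + 1 := by
            have h4 := mul_le_mul_of_nonneg_right (le_trans e1 hf2) hW.le
            rwa [mul_assoc, inv_mul_cancel₀ hW.ne', mul_one] at h4
          have h4 : (⌈mI * W⌉ : ℤ) ≤ k.2.2 + 1 := Int.ceil_le.2 (by exact_mod_cast h3)
          omega
        · apply Int.le_floor.2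
          have h4 := mul_le_mul_of_nonneg_right (le_trans hf1 e2) hW.le
          rwa [mul_assoc, inv_mul_cancel₀ hW.ne', mul_one] at h4
      · rintro k hk k' hk' h
        rw [Finset.mem_coe, Finset.mem_filter] at hk hk'
        have e1 := hk.2; have e2 := hk'.2
        rw [Prod.mk.injEq] at e1 e2
        exact Prod.ext (e1.1.trans e2.1.symm) (Prod.ext (e1.2.trans e2.2.symm) h)
    have h6 : ((Finset.Icc (⌈mI * W⌉ - 1) ⌊MI * W⌋).card : ℝ) ≤ (MI - mI) * W + 2 := by
      rw [Int.card_Icc]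
      rcases le_or_gt (⌊MI * W⌋ + 1 - (⌈mI * W⌉ - 1)) 0 with h | h
      · rw [Int.toNat_of_nonpos h]
        have : 0 ≤ (MI - mI) * W := mul_nonneg (by linarith) hW.le
        simpa using by linarith
      · rw [show (((⌊MI * W⌋ + 1 - (⌈mI * W⌉ - 1)).toNat : ℕ) : ℝ)
            = ((⌊MI * W⌋ + 1 - (⌈mI * W⌉ - 1) : ℤ) : ℝ) by
          exact_mod_cast congrArg ((Int.cast : ℤ → ℝ)) (Int.toNat_of_nonneg h.le)]
        push_cast
        linarith [Int.le_ceil (mI * W), Int.floor_le (MI * W)]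
    have h7 : MI - mI ≤ (if b ∈ core then Osc f (Dn N K n (b.1 + 1).toNat (b.2 + 1).toNat)
        else 2 * R) := by
      obtain ⟨pM, hpM, hpMv⟩ := himgc.sSup_mem himgne
      obtain ⟨pm, hpm, hpmv⟩ := himgc.sInf_mem himgne
      split_ifs with hc
      · rw [hcore, Finset.mem_product, Finset.mem_Icc, Finset.mem_Icc] at hc
        have hk1 : 1 ≤ (b.1 + 1).toNat := by omega
        have hk2 : (b.1 + 1).toNat ≤ M := by omega
        have hl1 : 1 ≤ (b.2 + 1).toNat := by omega
        have hl2 : (b.2 + 1).toNat ≤ M := by omega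
        have hcast1 : (((b.1 + 1).toNat : ℕ) : ℝ) = (b.1 : ℝ) + 1 := by
          have := Int.toNat_of_nonneg (show (0:ℤ) ≤ b.1 + 1 by omega)
          exact_mod_cast congrArg (Int.cast : ℤ → ℝ) this
        have hcast2 : (((b.2 + 1).toNat : ℕ) : ℝ) = (b.2 : ℝ) + 1 := by
          have := Int.toNat_of_nonneg (show (0:ℤ) ≤ b.2 + 1 by omega)
          exact_mod_cast congrArg (Int.cast : ℤ → ℝ) this
        have hsub : D' ⊆ Dn N K n (b.1 + 1).toNat (b.2 + 1).toNat := by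
          intro p hp
          obtain ⟨-, hp2⟩ := hp
          rw [Set.mem_prod, Set.mem_Icc, Set.mem_Icc] at hp2
          rw [mem_Dn, hcast1, hcast2, ← hWcast]
          constructor
          · constructor
            · rw [show ((b.1:ℝ) + 1 - 1) / W = (b.1:ℝ) * W⁻¹ by field_simp; ring]
              exact hp2.1.1
            · rw [show ((b.1:ℝ) + 1) / W = ((b.1:ℝ) + 1) * W⁻¹ by field_simp]
              exact hp2.1.2
          · constructor
            · rw [show ((b.2:ℝ) + 1 - 1) / W = (b.2:ℝ) * W⁻¹ by field_simp; ring]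
              exact hp2.2.1
            · rw [show ((b.2:ℝ) + 1) / W = ((b.2:ℝ) + 1) * W⁻¹ by field_simp]
              exact hp2.2.2
        have hDnsq : Dn N K n (b.1 + 1).toNat (b.2 + 1).toNat ⊆ SQ :=
          Dn_subset_sq hN hK hk1 (hMdef ▸ hk2) hl1 (hMdef ▸ hl2)
        have := le_csSup (oscSet_bddAbove hR hDnsq)
          (show MI - mI ∈ {d : ℝ | ∃ p ∈ Dn N K n (b.1 + 1).toNat (b.2 + 1).toNat,
            ∃ q ∈ Dn N K n (b.1 + 1).toNat (b.2 + 1).toNat, d = f p - f q} from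
            ⟨pM, hsub hpM, pm, hsub hpm, by rw [hpMv, hpmv, ← hMI, ← hmI]⟩)
        exact this
      · have e1 : MI ≤ R := by
          rw [hMI, ← hpMv]; exact le_of_abs_le (hR pM (hD'sq hpM))
        have e2 : -R ≤ mI := by
          rw [hmI, ← hpmv]; exact neg_le_of_abs_le (hR pm (hD'sq hpm))
        linarith
    calc ((hfin.toFinset.filter fun k : ℤ × ℤ × ℤ => ((k.1, k.2.1) : ℤ × ℤ) = b).card : ℝ)
        ≤ ((Finset.Icc (⌈mI * W⌉ - 1) ⌊MI * W⌋).card : ℝ) := by exact_mod_cast hcard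
      _ ≤ (MI - mI) * W + 2 := h6
      _ ≤ _ := by
          have := mul_le_mul_of_nonneg_right h7 hW.le
          linarith
  -- assemble the sum
  have hAnn : 0 ≤ OscSum f N K n SQ := oscsum_nonneg hR hN hK n
  have hcoresum : ∑ b ∈ core, Osc f (Dn N K n (b.1 + 1).toNat (b.2 + 1).toNat)
      = OscSum f N K n SQ := by
    rw [oscsum_eq hN hK n]
    apply Finset.sum_nbij' (fun b : ℤ × ℤ => (((b.1 + 1).toNat, (b.2 + 1).toNat) : ℕ × ℕ))
      (fun c : ℕ × ℕ => (((c.1 : ℤ) - 1, (c.2 : ℤ) - 1) : ℤ × ℤ))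
    · rintro ⟨b1, b2⟩ hb
      rw [hcore, Finset.mem_product, Finset.mem_Icc, Finset.mem_Icc] at hb
      rw [Finset.mem_product, Finset.mem_Icc, Finset.mem_Icc]
      refine ⟨⟨by omega, ?_⟩, by omega, ?_⟩ <;> omega
    · rintro ⟨c1, c2⟩ hc
      rw [Finset.mem_product, Finset.mem_Icc, Finset.mem_Icc] at hc
      rw [hcore, Finset.mem_product, Finset.mem_Icc, Finset.mem_Icc]
      constructor <;> constructor <;> omega
    · rintro ⟨b1, b2⟩ hb
      rw [hcore, Finset.mem_product, Finset.mem_Icc, Finset.mem_Icc] at hb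
      simp only [Prod.mk.injEq]
      constructor <;> omega
    · rintro ⟨c1, c2⟩ hc
      rw [Finset.mem_product, Finset.mem_Icc, Finset.mem_Icc] at hc
      simp only [Prod.mk.injEq]
      constructor <;> omega
    · rintro ⟨b1, b2⟩ _
      rfl
  have hcorecard : core.card = M * M := by
    have h1 : ((M:ℤ) - 1 + 1 - 0).toNat = M := by omega
    rw [hcore, Finset.card_product, Int.card_Icc, h1]
  have hboxcard : boxF.card = (M + 2) * (M + 2) := by
    have h1 : ((M:ℤ) + 1 - (-1)).toNat = M + 2 := by omega
    rw [hboxF, Finset.card_product, Int.card_Icc, h1]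
  have hsdiffcard : ((boxF \ core).card : ℝ) ≤ 8 * W := by
    rw [Finset.card_sdiff_of_subset hcoresub, hboxcard, hcorecard]
    rw [show (M + 2) * (M + 2) = M * M + (4 * M + 4) from by ring, Nat.add_sub_cancel_left]
    rw [← hMW]
    push_cast
    have : (1:ℝ) ≤ (M:ℝ) := by exact_mod_cast hM1
    linarith
  -- final computation
  have hsumR : (hfin.toFinset.card : ℝ) = ∑ b ∈ boxF,
      ((hfin.toFinset.filter fun k : ℤ × ℤ × ℤ => ((k.1, k.2.1) : ℤ × ℤ) = b).card : ℝ) := by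
    rw [hsum]; exact Nat.cast_sum _ _
  have s0 : ∑ b ∈ boxF,
      ((hfin.toFinset.filter fun k : ℤ × ℤ × ℤ => ((k.1, k.2.1) : ℤ × ℤ) = b).card : ℝ)
      ≤ ∑ b ∈ boxF, ((if b ∈ core then Osc f (Dn N K n (b.1 + 1).toNat (b.2 + 1).toNat)
          else 2 * R) * W + 2) := Finset.sum_le_sum hfib
  have s1 : ∑ b ∈ boxF, ((if b ∈ core then Osc f (Dn N K n (b.1 + 1).toNat (b.2 + 1).toNat)
      else 2 * R) * W + 2)
      = (∑ _b ∈ boxF \ core, (2 * R * W + 2))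
        + ∑ b ∈ core, (Osc f (Dn N K n (b.1 + 1).toNat (b.2 + 1).toNat) * W + 2) := by
    rw [← Finset.sum_sdiff hcoresub]
    congr 1
    · apply Finset.sum_congr rfl
      intro b hb
      rw [Finset.mem_sdiff] at hb
      rw [if_neg hb.2]
    · apply Finset.sum_congr rfl
      intro b hb
      rw [if_pos hb]
  have s2 : (∑ b ∈ core, (Osc f (Dn N K n (b.1 + 1).toNat (b.2 + 1).toNat) * W + 2))
      = W * OscSum f N K n SQ + 2 * (W * W) := by
    rw [Finset.sum_add_distrib, ← Finset.sum_mul, hcoresum, Finset.sum_const, hcorecard,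
      nsmul_eq_mul, ← hMW]
    push_cast
    ring
  have s3 : ∑ _b ∈ boxF \ core, (2 * R * W + 2) ≤ 8 * W * (2 * R * W + 2) := by
    rw [Finset.sum_const, nsmul_eq_mul]
    exact mul_le_mul_of_nonneg_right hsdiffcard (by nlinarith [hW, hR1])
  have main : (hfin.toFinset.card : ℝ) ≤
      W * OscSum f N K n SQ + 2 * (W * W) + 8 * W * (2 * R * W + 2) := by
    rw [hsumR]
    refine le_trans s0 (le_trans (le_of_eq s1) ?_)
    rw [s2]
    linarith [s3]
  have hMR : (1:ℝ) ≤ W := by rw [← hMW]; exact_mod_cast hM1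
  have hm0 : (0:ℝ) ≤ W := by linarith
  nlinarith [main, hAnn, hMR, hR1,
    mul_nonneg (sub_nonneg.2 hR1) (mul_nonneg hm0 hAnn),
    mul_nonneg (sub_nonneg.2 hR1) (mul_nonneg hm0 hm0),
    mul_nonneg (sub_nonneg.2 hMR) hm0]

end RFISAux
namespace RFISAux
open RFIS Set Filter

local notation "SQ" => RFIS.sq
local notation "GR" => RFIS.graphOn

variable {f : ℝ × ℝ → ℝ} {R ε : ℝ}

lemma prod_Icc_eq (a b : ℤ × ℤ × ℤ) :
    Finset.Icc a b = Finset.Icc a.1 b.1 ×ˢ (Finset.Icc a.2.1 b.2.1 ×ˢ Finset.Icc a.2.2 b.2.2) := by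
  ext k
  simp [Finset.mem_Icc, Finset.mem_product, Prod.le_def, and_assoc]; tauto

/-- Crude global bound `N(ε) ≤ 96 R / ε³`. -/
lemma Ncubes_crude (hR : ∀ p ∈ SQ, |f p| ≤ R) (hR1 : 1 ≤ R) (hε : 0 < ε) (hε1 : ε ≤ 1) :
    (Ncubes (GR f SQ) ε : ℝ) ≤ 96 * R / ε ^ 3 := by
  classical
  have hfin := idxSet_finite hε hR
  rw [Ncubes_eq, Set.ncard_eq_toFinset_card _ hfin]
  have hsub : hfin.toFinset ⊆
      Finset.Icc ((-1 : ℤ), (-1 : ℤ), -⌈R / ε⌉ - 1) (⌈1 / ε⌉, ⌈1 / ε⌉, ⌈R / ε⌉) := by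
    intro k hk
    rw [Set.Finite.mem_toFinset] at hk
    have h := idxSet_subset hε hR hk
    rw [Set.mem_Icc] at h
    rw [Finset.mem_Icc]
    exact h
  have hcard := Finset.card_le_card hsub
  simp only [prod_Icc_eq, Finset.card_product, Int.card_Icc] at hcard
  have ht : (1:ℝ) ≤ 1 / ε := by rw [le_div_iff₀ hε]; linarith
  have ht0 : (0:ℝ) < 1 / ε := by positivity
  have hRe : (0:ℝ) < R / ε := by positivity
  have c1 : ((⌈1 / ε⌉ + 1 - (-1)).toNat : ℝ) ≤ 4 * (1 / ε) := by
    have h0 : (0:ℤ) ≤ ⌈1 / ε⌉ + 1 - (-1) := by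
      have : (0:ℤ) ≤ ⌈1 / ε⌉ := Int.ceil_nonneg ht0.le
      omega
    rw [show (((⌈1 / ε⌉ + 1 - (-1)).toNat : ℕ) : ℝ) = ((⌈1 / ε⌉ + 1 - (-1) : ℤ) : ℝ) by
      exact_mod_cast congrArg (Int.cast : ℤ → ℝ) (Int.toNat_of_nonneg h0)]
    push_cast
    have := Int.ceil_lt_add_one (1 / ε)
    linarith
  have c3 : ((⌈R / ε⌉ + 1 - (-⌈R / ε⌉ - 1)).toNat : ℝ) ≤ 6 * (R / ε) := by
    have h0 : (0:ℤ) ≤ ⌈R / ε⌉ + 1 - (-⌈R / ε⌉ - 1) := by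
      have : (0:ℤ) ≤ ⌈R / ε⌉ := Int.ceil_nonneg hRe.le
      omega
    rw [show (((⌈R / ε⌉ + 1 - (-⌈R / ε⌉ - 1)).toNat : ℕ) : ℝ)
        = ((⌈R / ε⌉ + 1 - (-⌈R / ε⌉ - 1) : ℤ) : ℝ) by
      exact_mod_cast congrArg (Int.cast : ℤ → ℝ) (Int.toNat_of_nonneg h0)]
    push_cast
    have h1 := Int.ceil_lt_add_one (R / ε)
    have h2 : (1:ℝ) ≤ R / ε := by
      rw [le_div_iff₀ hε]; nlinarith
    linarith
  have hcardR : (hfin.toFinset.card : ℝ) ≤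
      (4 * (1 / ε)) * ((4 * (1 / ε)) * (6 * (R / ε))) := by
    calc (hfin.toFinset.card : ℝ)
        ≤ (((⌈1 / ε⌉ + 1 - (-1)).toNat : ℝ)) * (((⌈1 / ε⌉ + 1 - (-1)).toNat : ℝ)
            * ((⌈R / ε⌉ + 1 - (-⌈R / ε⌉ - 1)).toNat : ℝ)) := by exact_mod_cast hcard
      _ ≤ _ := by
        have n1 : (0:ℝ) ≤ ((⌈1 / ε⌉ + 1 - (-1)).toNat : ℝ) := Nat.cast_nonneg _
        have n3 : (0:ℝ) ≤ ((⌈R / ε⌉ + 1 - (-⌈R / ε⌉ - 1)).toNat : ℝ) := Nat.cast_nonneg _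
        gcongr
  calc (hfin.toFinset.card : ℝ) ≤ _ := hcardR
    _ = 96 * R / ε ^ 3 := by field_simp; ring

lemma tendsto_log_one_div :
    Tendsto (fun ε : ℝ => Real.log (1 / ε)) (nhdsWithin 0 (Ioi 0)) atTop := by
  have h1 : Tendsto (fun x : ℝ => x⁻¹) (nhdsWithin (0:ℝ) (Ioi 0)) atTop :=
    tendsto_inv_nhdsGT_zero
  have h2 := Real.tendsto_log_atTop.comp h1
  refine h2.congr fun x => ?_
  simp [Function.comp, one_div]

lemma tendsto_envelope_add (c0 C : ℝ) :
    Tendsto (fun ε : ℝ => c0 + C / Real.log (1 / ε)) (nhdsWithin 0 (Ioi 0)) (nhds c0) := by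
  have h : Tendsto (fun ε : ℝ => C / Real.log (1 / ε)) (nhdsWithin 0 (Ioi 0)) (nhds 0) :=
    Tendsto.div_atTop tendsto_const_nhds tendsto_log_one_div
  simpa using (tendsto_const_nhds (x := c0)).add h

lemma tendsto_envelope_sub (c0 C : ℝ) :
    Tendsto (fun ε : ℝ => c0 - C / Real.log (1 / ε)) (nhdsWithin 0 (Ioi 0)) (nhds c0) := by
  have h : Tendsto (fun ε : ℝ => C / Real.log (1 / ε)) (nhdsWithin 0 (Ioi 0)) (nhds 0) :=
    Tendsto.div_atTop tendsto_const_nhds tendsto_log_one_div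
  simpa using (tendsto_const_nhds (x := c0)).sub h

lemma eventually_Ioo {r : ℝ} (hr : 0 < r) :
    ∀ᶠ ε in nhdsWithin (0:ℝ) (Ioi 0), ε ∈ Ioo 0 r :=
  eventually_of_mem (Ioo_mem_nhdsGT_of_mem ⟨le_refl 0, hr⟩) (fun _ h => h)

lemma scale_mono {K N : ℕ} (hN : 1 ≤ N) (hK : 1 ≤ K) {m m' : ℕ} (h : m ≤ m') :
    ((K:ℝ) ^ m' * (N:ℝ))⁻¹ ≤ ((K:ℝ) ^ m * (N:ℝ))⁻¹ := by
  have h1 : (1:ℝ) ≤ (K:ℝ) := by exact_mod_cast hK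
  have hNp : (0:ℝ) < (N:ℝ) := by exact_mod_cast Nat.lt_of_lt_of_le Nat.zero_lt_one hN
  apply inv_anti₀
  · positivity
  · have := pow_le_pow_right₀ h1 h
    nlinarith
  
lemma scale_select {K N : ℕ} (hN : 1 ≤ N) (hK : 2 ≤ K) {ε : ℝ} (hε : 0 < ε) (n0 : ℕ)
    (hεs : ε ≤ ((K:ℝ) ^ n0 * (N:ℝ))⁻¹) :
    ∃ n : ℕ, n0 ≤ n ∧ ε ≤ ((K:ℝ) ^ n * (N:ℝ))⁻¹ ∧ ((K:ℝ) ^ (n+1) * (N:ℝ))⁻¹ < ε := by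
  have hK1 : (1:ℝ) < (K:ℝ) := by exact_mod_cast hK
  have hNp : (0:ℝ) < (N:ℝ) := by
    exact_mod_cast Nat.lt_of_lt_of_le Nat.zero_lt_one hN
  have hPex : ∃ m : ℕ, ((K:ℝ) ^ m * (N:ℝ))⁻¹ < ε := by
    obtain ⟨m, hm⟩ := pow_unbounded_of_one_lt (ε⁻¹ / (N:ℝ)) hK1
    refine ⟨m, ?_⟩
    rw [div_lt_iff₀ hNp] at hm
    have hKm : (0:ℝ) < (K:ℝ) ^ m * (N:ℝ) := by positivity
    rw [inv_lt_iff_one_lt_mul₀ hKm]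
    have := mul_lt_mul_of_pos_right hm hε
    rw [inv_mul_cancel₀ hε.ne'] at this
    nlinarith
  classical
  set m₁ := Nat.find hPex with hm₁
  have hfind := Nat.find_spec hPex
  have hgt : n0 < m₁ := by
    by_contra hle
    push_neg at hle
    have hcon : ((K:ℝ) ^ n0 * (N:ℝ))⁻¹ < ε :=
      lt_of_le_of_lt (scale_mono hN (by omega) hle) hfind
    linarith
  refine ⟨m₁ - 1, by omega, ?_, ?_⟩
  · have hnot := Nat.find_min hPex (m := m₁ - 1) (by omega)
    exact not_lt.1 hnot
  · have hmm : m₁ - 1 + 1 = m₁ := by omega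
    rw [hmm]
    exact hfind
end RFISAux
namespace RFISAux
open RFIS Set Filter

local notation "SQ" => RFIS.sq
local notation "GR" => RFIS.graphOn

/-- A bound for the logarithmic ratio sequences. -/
lemma seq_ratio_bound {R : ℝ} (hR1 : 1 ≤ R) {N K : ℕ} (hN : 1 ≤ N) (hK : 2 ≤ K)
    (n : ℕ) {x : ℝ} (hx0 : 0 ≤ x) (hx : x ≤ 4 * R * ((K:ℝ) ^ n * (N:ℝ)) ^ 2) :
    Real.log x / ((n:ℝ) * Real.log K)
      ≤ 2 + (Real.log (4 * R) + 2 * Real.log N) / Real.log K := by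
  have hK1 : (1:ℝ) < (K:ℝ) := by exact_mod_cast hK
  have hlK : 0 < Real.log K := Real.log_pos hK1
  have hlN : 0 ≤ Real.log N := Real.log_nonneg (by exact_mod_cast hN)
  have hl4R : 0 ≤ Real.log (4 * R) := Real.log_nonneg (by nlinarith)
  have hRHS0 : 0 ≤ 2 + (Real.log (4 * R) + 2 * Real.log N) / Real.log K := by positivity
  rcases Nat.eq_zero_or_pos n with hn | hn
  · subst hn; simpa using hRHS0
  have hn1 : (1:ℝ) ≤ (n:ℝ) := by exact_mod_cast hn
  have hden : 0 < (n:ℝ) * Real.log K := by positivity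
  have hMpos : (0:ℝ) < (K:ℝ) ^ n * (N:ℝ) := W_pos hN (by omega) n
  have hlogM : Real.log ((K:ℝ) ^ n * (N:ℝ)) = (n:ℝ) * Real.log K + Real.log N := by
    rw [Real.log_mul (by positivity) (by positivity), Real.log_pow]
  have hlogbound : Real.log x ≤ Real.log (4 * R) + 2 * ((n:ℝ) * Real.log K + Real.log N) := by
    rcases eq_or_lt_of_le hx0 with hx0' | hx0'
    · rw [← hx0', Real.log_zero]; positivity
    · calc Real.log x ≤ Real.log (4 * R * ((K:ℝ) ^ n * (N:ℝ)) ^ 2) :=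
            Real.log_le_log hx0' hx
        _ = Real.log (4 * R) + 2 * ((n:ℝ) * Real.log K + Real.log N) := by
            rw [Real.log_mul (by nlinarith) (by positivity), Real.log_pow, hlogM]
            push_cast; ring
  rw [div_le_iff₀ hden]
  have hexp : (2 + (Real.log (4 * R) + 2 * Real.log N) / Real.log K) * ((n:ℝ) * Real.log K)
      = 2 * (n:ℝ) * Real.log K + (Real.log (4 * R) + 2 * Real.log N) * (n:ℝ) := by
    field_simp
  rw [hexp]
  nlinarith [mul_nonneg (add_nonneg hl4R (by linarith : (0:ℝ) ≤ 2 * Real.log N))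
    (by linarith : (0:ℝ) ≤ (n:ℝ) - 1)]

set_option maxHeartbeats 2000000 in
lemma main_aux {N K : ℕ} (hN : 1 ≤ N) (hK : 2 ≤ K) {f : ℝ × ℝ → ℝ}
    (hf : ContinuousOn f SQ) :
    max 2 (1 + liminf
        (fun n : ℕ => Real.log (OscSum f N K n SQ) / ((n : ℝ) * Real.log (K : ℝ))) atTop)
      ≤ lowerBoxDim (GR f SQ) ∧
    upperBoxDim (GR f SQ)
      ≤ 1 + limsup
        (fun n : ℕ => Real.log (OscSum f N K n SQ + 2 * (K : ℝ) ^ n * (N : ℝ))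
          / ((n : ℝ) * Real.log (K : ℝ))) atTop := by
  classical
  obtain ⟨C, hC⟩ := isCompact_sq.exists_bound_of_continuousOn hf
  set R : ℝ := max C 1 with hRdef
  have hR : ∀ p ∈ SQ, |f p| ≤ R := fun p hp => by
    have := hC p hp; rw [Real.norm_eq_abs] at this
    exact this.trans (le_max_left _ _)
  have hR1 : (1:ℝ) ≤ R := le_max_right _ _
  have hK1 : 1 ≤ K := by omega
  have hKR : (1:ℝ) < (K:ℝ) := by exact_mod_cast hK
  have hlK : 0 < Real.log K := Real.log_pos hKR
  have hNR : (1:ℝ) ≤ (N:ℝ) := by exact_mod_cast hN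
  have hlN : 0 ≤ Real.log N := Real.log_nonneg hNR
  set E : Set (ℝ × ℝ × ℝ) := GR f SQ with hE
  set u : ℝ → ℝ := boxRatio E with hu
  set F : Filter ℝ := nhdsWithin (0:ℝ) (Ioi 0) with hF
  have hA0 : ∀ n, 0 ≤ OscSum f N K n SQ := fun n => oscsum_nonneg hR hN hK1 n
  have hMrval : ∀ n : ℕ, ((K ^ n * N : ℕ) : ℝ) = (K:ℝ) ^ n * (N:ℝ) := by
    intro n; push_cast; ring
  have hMrpos : ∀ n : ℕ, (0:ℝ) < (K:ℝ) ^ n * (N:ℝ) := fun n => W_pos hN hK1 n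
  have hMr1 : ∀ n : ℕ, (1:ℝ) ≤ (K:ℝ) ^ n * (N:ℝ) := by
    intro n
    have h1 : (1:ℝ) ≤ (K:ℝ) ^ n := by
      simpa using pow_le_pow_left₀ (by norm_num : (0:ℝ) ≤ 1) hKR.le n
    nlinarith
  have hNc1 : ∀ ε : ℝ, 0 < ε → (1:ℝ) ≤ (Ncubes E ε : ℝ) := fun ε hε => by
    exact_mod_cast one_le_Ncubes hε hR
  have hueq : ∀ ε : ℝ, u ε = Real.log (Ncubes E ε) / Real.log (1 / ε) := fun ε => rfl
  have hev0 : ∀ᶠ ε in F, 0 ≤ u ε ∧ 0 < Real.log (1 / ε) := by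
    filter_upwards [eventually_Ioo (r := 1) one_pos] with ε hε
    have hl : 0 < Real.log (1 / ε) := Real.log_pos (one_lt_one_div hε.1 hε.2)
    exact ⟨div_nonneg (Real.log_nonneg (hNc1 ε hε.1)) hl.le, hl⟩
  have hbnd_ge : F.IsBoundedUnder (· ≥ ·) u :=
    ⟨0, eventually_map.2 (hev0.mono fun ε h => h.1)⟩
  have hcob_le : F.IsCoboundedUnder (· ≤ ·) u := hbnd_ge.isCoboundedUnder_le
  have hubnd : F.IsBoundedUnder (· ≤ ·) u := by
    refine ⟨3 + Real.log (96 * R), eventually_map.2 ?_⟩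
    have hr0 : (0:ℝ) < min 1 (Real.exp (-1)) := lt_min one_pos (Real.exp_pos _)
    filter_upwards [eventually_Ioo hr0] with ε hε
    have hε1 : ε ≤ 1 := le_of_lt (lt_of_lt_of_le hε.2 (min_le_left _ _))
    have hεe : ε ≤ Real.exp (-1) := le_of_lt (lt_of_lt_of_le hε.2 (min_le_right _ _))
    have hl1 : (1:ℝ) ≤ Real.log (1 / ε) := by
      rw [Real.le_log_iff_exp_le (div_pos one_pos hε.1), le_div_iff₀ hε.1]
      calc Real.exp 1 * ε ≤ Real.exp 1 * Real.exp (-1) :=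
            mul_le_mul_of_nonneg_left hεe (Real.exp_pos 1).le
        _ = 1 := by rw [← Real.exp_add]; norm_num [Real.exp_zero]
    have hlpos : 0 < Real.log (1 / ε) := lt_of_lt_of_le one_pos hl1
    have hl96 : 0 ≤ Real.log (96 * R) := Real.log_nonneg (by nlinarith)
    have hNcpos : (0:ℝ) < (Ncubes E ε : ℝ) := lt_of_lt_of_le one_pos (hNc1 ε hε.1)
    have hcrude := Ncubes_crude hR hR1 hε.1 hε1
    have hlog : Real.log (Ncubes E ε) ≤ Real.log (96 * R) + 3 * Real.log (1 / ε) := by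
      calc Real.log (Ncubes E ε) ≤ Real.log (96 * R / ε ^ 3) := Real.log_le_log hNcpos hcrude
        _ = Real.log (96 * R) + 3 * Real.log (1 / ε) := by
            rw [show 96 * R / ε ^ 3 = 96 * R * (1 / ε) ^ 3 by field_simp,
              Real.log_mul (by nlinarith) (pow_ne_zero _ (one_div_ne_zero hε.1.ne')),
              Real.log_pow]
            push_cast; ring
    rw [hueq, div_le_iff₀ hlpos]
    nlinarith [mul_le_mul_of_nonneg_left hl1 hl96]
  have hcob_ge : F.IsCoboundedUnder (· ≥ ·) u := hubnd.isCoboundedUnder_ge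
  -- Part (a): 2 ≤ liminf u
  have h2 : 2 ≤ liminf u F := by
    have hev : ∀ᶠ ε in F, 2 - Real.log 4 / Real.log (1 / ε) ≤ u ε := by
      filter_upwards [eventually_Ioo (r := 1/2) (by norm_num)] with ε hε
      have h2ε : (0:ℝ) < 2 * ε := by linarith [hε.1]
      have h1ε : (2:ℝ) ≤ 1 / ε := by rw [le_div_iff₀ hε.1]; linarith [hε.2]
      have hlpos : 0 < Real.log (1 / ε) := Real.log_pos (by linarith)
      have hq : (0:ℝ) < 1 / (2 * ε) := div_pos one_pos h2ε
      have hεne : ε ≠ 0 := hε.1.ne'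
      have hm : 1 / (2 * ε) ≤ (⌊1 / ε⌋₊ : ℝ) := by
        have ha := Nat.sub_one_lt_floor (1 / ε)
        have hsum : 1 / (2 * ε) + 1 / (2 * ε) = 1 / ε := by
          rw [← add_div]
          rw [show (1:ℝ) + 1 = 2 by norm_num]
          rw [div_eq_div_iff h2ε.ne' hε.1.ne']
          ring
        have hone : (1:ℝ) ≤ 1 / (2 * ε) := by
          rw [le_div_iff₀ h2ε]; linarith [hε.2]
        linarith
      have hgrid := grid_le_Ncubes hR hε.1 (by linarith [hε.2] : ε ≤ 1)
      have hgridR : ((⌊1 / ε⌋₊ : ℝ)) ^ 2 ≤ (Ncubes E ε : ℝ) := by exact_mod_cast hgrid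
      have hNlow : (1 / (2 * ε)) ^ 2 ≤ (Ncubes E ε : ℝ) :=
        le_trans (by nlinarith [hm, hq.le]) hgridR
      have hNpos : (0:ℝ) < (1 / (2 * ε)) ^ 2 := pow_pos hq 2
      have hlog : 2 * Real.log (1 / ε) - Real.log 4 ≤ Real.log (Ncubes E ε) := by
        have hle := Real.log_le_log hNpos hNlow
        have heq : Real.log ((1 / (2 * ε)) ^ 2) = 2 * Real.log (1 / ε) - Real.log 4 := by
          rw [show (1:ℝ) / (2 * ε) = (1 / ε) / 2 by rw [div_div]; ring_nf,
            Real.log_pow, Real.log_div (one_div_ne_zero hε.1.ne') two_ne_zero,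
            show (4:ℝ) = 2 ^ 2 by norm_num, Real.log_pow]
          push_cast; ring
        rw [heq] at hle
        exact hle
      rw [hueq]
      have heq2 : 2 - Real.log 4 / Real.log (1 / ε)
          = (2 * Real.log (1 / ε) - Real.log 4) / Real.log (1 / ε) := by
        field_simp
      rw [heq2]
      exact (div_le_div_iff_of_pos_right hlpos).2 hlog
    have hten := tendsto_envelope_sub 2 (Real.log 4)
    have hll := liminf_le_liminf hev hten.isBoundedUnder_ge hcob_ge
    rwa [hten.liminf_eq] at hll
  -- key lower estimate
  have keyLow : ∀ b : ℝ, 1 < b →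
      (∀ᶠ n in atTop, b ≤ Real.log (OscSum f N K n SQ) / ((n:ℝ) * Real.log K)) →
      1 + b ≤ liminf u F := by
    intro b hb1 hbev
    obtain ⟨n0', hn0'⟩ := eventually_atTop.1 hbev
    set n0 : ℕ := max n0' 1 with hn0def
    set Cb : ℝ := (1 + b) * (Real.log K + Real.log N) + Real.log 27 - Real.log N with hCb
    have henv : ∀ᶠ ε in F, (1 + b) - Cb / Real.log (1 / ε) ≤ u ε := by
      have hrpos : (0:ℝ) < ((K:ℝ) ^ n0 * (N:ℝ))⁻¹ := inv_pos.2 (hMrpos n0)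
      filter_upwards [eventually_Ioo hrpos] with ε hε
      obtain ⟨n, hn0n, hup, hdown⟩ := scale_select hN hK hε.1 n0 hε.2.le
      have hn1 : 1 ≤ n := le_trans (le_max_right _ _) hn0n
      have hnR : (1:ℝ) ≤ (n:ℝ) := by exact_mod_cast hn1
      have hden : (0:ℝ) < (n:ℝ) * Real.log K := mul_pos (by linarith) hlK
      have hbL := hn0' n (le_trans (le_max_left _ _) hn0n)
      have hby : b * ((n:ℝ) * Real.log K) ≤ Real.log (OscSum f N K n SQ) := by
        rw [← le_div_iff₀ hden]; exact hbL
      have hlogApos : 0 < Real.log (OscSum f N K n SQ) := lt_of_lt_of_le (by nlinarith) hby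
      have hApos : 0 < OscSum f N K n SQ := by
        by_contra hle
        push_neg at hle
        rcases eq_or_lt_of_le hle with h | h
        · rw [h, Real.log_zero] at hlogApos; linarith
        · linarith [hA0 n]
      -- counting chain
      have hscale : (Ncubes E (((K:ℝ) ^ n * (N:ℝ))⁻¹) : ℝ) ≤ 27 * (Ncubes E ε : ℝ) := by
        exact_mod_cast Ncubes_scale hR hε.1 hup
      have hlow := oscsum_le_Ncubes hf hR hN hK1 n
      rw [hMrval n] at hlow
      have hMA : ((K:ℝ) ^ n * (N:ℝ)) * OscSum f N K n SQ ≤ 27 * (Ncubes E ε : ℝ) :=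
        le_trans hlow hscale
      have hNcpos : (0:ℝ) < (Ncubes E ε : ℝ) := lt_of_lt_of_le one_pos (hNc1 ε hε.1)
      have hargpos : (0:ℝ) < ((K:ℝ) ^ n * (N:ℝ)) * OscSum f N K n SQ :=
        mul_pos (hMrpos n) hApos
      have hlogchain : Real.log (((K:ℝ) ^ n * (N:ℝ)) * OscSum f N K n SQ)
          ≤ Real.log 27 + Real.log (Ncubes E ε) := by
        calc Real.log (((K:ℝ) ^ n * (N:ℝ)) * OscSum f N K n SQ)
            ≤ Real.log (27 * (Ncubes E ε : ℝ)) := Real.log_le_log hargpos hMA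
          _ = Real.log 27 + Real.log (Ncubes E ε) :=
              Real.log_mul (by norm_num) hNcpos.ne'
      have hlogexp : Real.log (((K:ℝ) ^ n * (N:ℝ)) * OscSum f N K n SQ)
          = (n:ℝ) * Real.log K + Real.log N + Real.log (OscSum f N K n SQ) := by
        rw [Real.log_mul (hMrpos n).ne' hApos.ne',
          Real.log_mul (by positivity) (by positivity), Real.log_pow]
      have hNclow : (n:ℝ) * Real.log K + Real.log N + b * ((n:ℝ) * Real.log K)
          - Real.log 27 ≤ Real.log (Ncubes E ε) := by
        rw [hlogexp] at hlogchain
        linarith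
      -- the log of 1/ε
      have hℓpos : 0 < Real.log (1 / ε) := by
        apply Real.log_pos
        have hinvle : ((K:ℝ) ^ n0 * (N:ℝ))⁻¹ ≤ 1 := inv_le_one_of_one_le₀ (hMr1 n0)
        exact one_lt_one_div hε.1 (lt_of_lt_of_le hε.2 hinvle)
      have hℓup : Real.log (1 / ε) < ((n:ℝ) + 1) * Real.log K + Real.log N := by
        have hP : (0:ℝ) < (K:ℝ) ^ (n + 1) * (N:ℝ) := hMrpos (n + 1)
        have h1 : 1 / ε < (K:ℝ) ^ (n + 1) * (N:ℝ) := by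
          rw [div_lt_iff₀ hε.1]
          have h2 := mul_lt_mul_of_pos_left hdown hP
          rw [mul_inv_cancel₀ hP.ne'] at h2
          linarith [h2]
        calc Real.log (1 / ε) < Real.log ((K:ℝ) ^ (n + 1) * (N:ℝ)) :=
              Real.log_lt_log (div_pos one_pos hε.1) h1
          _ = ((n:ℝ) + 1) * Real.log K + Real.log N := by
              rw [Real.log_mul (by positivity) (by positivity), Real.log_pow]
              push_cast; ring
      have hmul : (1 + b) * Real.log (1 / ε)
          ≤ (1 + b) * (((n:ℝ) + 1) * Real.log K + Real.log N) :=
        mul_le_mul_of_nonneg_left hℓup.le (by linarith)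
      have hkey : (1 + b) * Real.log (1 / ε) - Cb ≤ Real.log (Ncubes E ε) := by
        rw [hCb]
        nlinarith [hmul, hNclow]
      rw [hueq]
      have heq : (1 + b) - Cb / Real.log (1 / ε)
          = ((1 + b) * Real.log (1 / ε) - Cb) / Real.log (1 / ε) := by
        field_simp
      rw [heq]
      exact (div_le_div_iff_of_pos_right hℓpos).2 hkey
    have hten := tendsto_envelope_sub (1 + b) Cb
    have hll := liminf_le_liminf henv hten.isBoundedUnder_ge hcob_ge
    rwa [hten.liminf_eq] at hll
  -- key upper estimate
  have keyUp : ∀ a : ℝ, 1 ≤ a →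
      (∀ᶠ n in atTop, Real.log (OscSum f N K n SQ + 2 * (K:ℝ) ^ n * (N:ℝ))
        / ((n:ℝ) * Real.log K) ≤ a) →
      limsup u F ≤ 1 + a := by
    intro a ha1 haev
    obtain ⟨n0', hn0'⟩ := eventually_atTop.1 haev
    set n0 : ℕ := max n0' 1 with hn0def
    set Ca : ℝ := Real.log (918 * R) + Real.log N + (1 + a) * (Real.log K - Real.log N)
      with hCa
    have henvU : ∀ᶠ ε in F, u ε ≤ (1 + a) + Ca / Real.log (1 / ε) := by
      have hrpos : (0:ℝ) < ((K:ℝ) ^ n0 * (N:ℝ))⁻¹ := inv_pos.2 (hMrpos n0)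
      filter_upwards [eventually_Ioo hrpos] with ε hε
      obtain ⟨n, hn0n, hup, hdown⟩ := scale_select hN hK hε.1 n0 hε.2.le
      have hn1 : 1 ≤ n := le_trans (le_max_right _ _) hn0n
      have hnR : (1:ℝ) ≤ (n:ℝ) := by exact_mod_cast hn1
      have hdenU : (0:ℝ) < ((n:ℝ) + 1) * Real.log K := mul_pos (by linarith) hlK
      have haU := hn0' (n + 1) (le_trans (le_max_left _ _) (le_trans hn0n (by omega)))
      have hcastn : (((n + 1 : ℕ)):ℝ) = (n:ℝ) + 1 := by push_cast; ring
      rw [hcastn] at haU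
      have hlogU : Real.log (OscSum f N K (n+1) SQ + 2 * (K:ℝ) ^ (n+1) * (N:ℝ))
          ≤ a * (((n:ℝ) + 1) * Real.log K) := by
        rw [← div_le_iff₀ hdenU]; exact haU
      have hXpos : (0:ℝ) < OscSum f N K (n+1) SQ + 2 * (K:ℝ) ^ (n+1) * (N:ℝ) := by
        have := hMrpos (n+1); have := hA0 (n+1); nlinarith
      -- counting chain
      have hscaleU : (Ncubes E ε : ℝ) ≤ 27 * (Ncubes E (((K:ℝ) ^ (n+1) * (N:ℝ))⁻¹) : ℝ) := by
        exact_mod_cast Ncubes_scale hR (inv_pos.2 (hMrpos (n+1))) hdown.le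
      have hupper := Ncubes_le_oscsum hf hR hR1 hN hK1 (n+1)
      rw [hMrval (n+1)] at hupper
      have hNcpos : (0:ℝ) < (Ncubes E ε : ℝ) := lt_of_lt_of_le one_pos (hNc1 ε hε.1)
      have hchain : (Ncubes E ε : ℝ) ≤ 918 * R * (((K:ℝ) ^ (n+1) * (N:ℝ))
          * (OscSum f N K (n+1) SQ + 2 * (K:ℝ) ^ (n+1) * (N:ℝ))) := by
        have h27 : (Ncubes E ε : ℝ) ≤ 27 * (34 * R * ((K:ℝ) ^ (n+1) * (N:ℝ))
            * (OscSum f N K (n+1) SQ + 2 * ((K:ℝ) ^ (n+1) * (N:ℝ)))) := by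
          calc (Ncubes E ε : ℝ) ≤ _ := hscaleU
            _ ≤ _ := by
              have := hupper
              nlinarith [this]
        nlinarith [h27]
      have hargpos : (0:ℝ) < 918 * R * (((K:ℝ) ^ (n+1) * (N:ℝ))
          * (OscSum f N K (n+1) SQ + 2 * (K:ℝ) ^ (n+1) * (N:ℝ))) := by
        have := hMrpos (n+1); nlinarith [hXpos]
      have hloghi : Real.log (Ncubes E ε) ≤ Real.log (918 * R)
          + (((n:ℝ) + 1) * Real.log K + Real.log N)
          + Real.log (OscSum f N K (n+1) SQ + 2 * (K:ℝ) ^ (n+1) * (N:ℝ)) := by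
        calc Real.log (Ncubes E ε) ≤ Real.log (918 * R * (((K:ℝ) ^ (n+1) * (N:ℝ))
              * (OscSum f N K (n+1) SQ + 2 * (K:ℝ) ^ (n+1) * (N:ℝ)))) :=
            Real.log_le_log hNcpos hchain
          _ = _ := by
            have hKpos : (0:ℝ) < (K:ℝ) := by linarith
            have hNpos : (0:ℝ) < (N:ℝ) := by linarith
            rw [Real.log_mul (by nlinarith) (mul_pos (hMrpos (n+1)) hXpos).ne',
              Real.log_mul (hMrpos (n+1)).ne' hXpos.ne',
              Real.log_mul (pow_ne_zero (n+1) hKpos.ne') hNpos.ne', Real.log_pow]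
            push_cast; ring
      have hℓpos : 0 < Real.log (1 / ε) := by
        apply Real.log_pos
        have hinvle : ((K:ℝ) ^ n0 * (N:ℝ))⁻¹ ≤ 1 := inv_le_one_of_one_le₀ (hMr1 n0)
        exact one_lt_one_div hε.1 (lt_of_lt_of_le hε.2 hinvle)
      have hℓlow : (n:ℝ) * Real.log K + Real.log N ≤ Real.log (1 / ε) := by
        have hP : (0:ℝ) < (K:ℝ) ^ n * (N:ℝ) := hMrpos n
        have h1 : (K:ℝ) ^ n * (N:ℝ) ≤ 1 / ε := by
          rw [le_div_iff₀ hε.1]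
          have h2 := mul_le_mul_of_nonneg_left hup hP.le
          rw [mul_inv_cancel₀ hP.ne'] at h2
          linarith [h2]
        calc (n:ℝ) * Real.log K + Real.log N = Real.log ((K:ℝ) ^ n * (N:ℝ)) := by
              rw [Real.log_mul (by positivity) (by positivity), Real.log_pow]
          _ ≤ Real.log (1 / ε) := Real.log_le_log hP h1
      have hmulU : (1 + a) * ((n:ℝ) * Real.log K)
          ≤ (1 + a) * (Real.log (1 / ε) - Real.log N) :=
        mul_le_mul_of_nonneg_left (by linarith) (by linarith)
      have hkeyU : Real.log (Ncubes E ε) ≤ (1 + a) * Real.log (1 / ε) + Ca := by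
        rw [hCa]
        nlinarith [hmulU, hloghi, hlogU]
      rw [hueq]
      have heq : (1 + a) + Ca / Real.log (1 / ε)
          = ((1 + a) * Real.log (1 / ε) + Ca) / Real.log (1 / ε) := by
        field_simp
      rw [heq]
      exact (div_le_div_iff_of_pos_right hℓpos).2 hkeyU
    have hten := tendsto_envelope_add (1 + a) Ca
    have hll := limsup_le_limsup henvU hcob_le hten.isBoundedUnder_le
    rwa [hten.limsup_eq] at hll
  -- boundedness of the U-sequence
  have hUbnd : IsBoundedUnder (· ≤ ·) atTop
      (fun n : ℕ => Real.log (OscSum f N K n SQ + 2 * (K:ℝ) ^ n * (N:ℝ))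
        / ((n:ℝ) * Real.log K)) := by
    refine ⟨2 + (Real.log (4 * R) + 2 * Real.log N) / Real.log K,
      eventually_map.2 (Eventually.of_forall fun n => ?_)⟩
    apply seq_ratio_bound hR1 hN hK n
    · have := hA0 n; have := hMrpos n; nlinarith
    · have h1 := oscsum_le hR hN hK1 n
      rw [hMrval n] at h1
      have h2 := hMr1 n
      nlinarith [hMrpos n]
  -- d ≥ 1
  have hd1 : (1:ℝ) ≤ limsup
      (fun n : ℕ => Real.log (OscSum f N K n SQ + 2 * (K:ℝ) ^ n * (N:ℝ))
        / ((n:ℝ) * Real.log K)) atTop := by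
    apply le_limsup_of_frequently_le _ hUbnd
    apply Eventually.frequently
    rw [eventually_atTop]
    refine ⟨1, fun n hn => ?_⟩
    have hnR : (1:ℝ) ≤ (n:ℝ) := by exact_mod_cast hn
    have hden : (0:ℝ) < (n:ℝ) * Real.log K := mul_pos (by linarith) hlK
    rw [le_div_iff₀ hden, one_mul]
    have harg : (K:ℝ) ^ n ≤ OscSum f N K n SQ + 2 * (K:ℝ) ^ n * (N:ℝ) := by
      have := hA0 n
      have hp : (0:ℝ) < (K:ℝ) ^ n := by positivity
      nlinarith
    calc (n:ℝ) * Real.log K = Real.log ((K:ℝ) ^ n) := by rw [Real.log_pow]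
      _ ≤ _ := Real.log_le_log (by positivity) harg
  have hldim : lowerBoxDim E = liminf u F := rfl
  have hudim : upperBoxDim E = limsup u F := rfl
  constructor
  · -- lower bound
    rw [hldim]
    apply max_le h2
    by_contra hcon
    push_neg at hcon
    obtain ⟨x, hx1, hx2⟩ := exists_between hcon
    have hc1 : (1:ℝ) < liminf
        (fun n : ℕ => Real.log (OscSum f N K n SQ) / ((n:ℝ) * Real.log K)) atTop := by
      by_contra hle
      push_neg at hle
      linarith
    have hSne : {a : ℝ | ∀ᶠ n in atTop,
        a ≤ Real.log (OscSum f N K n SQ) / ((n:ℝ) * Real.log K)}.Nonempty := by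
      by_contra hemp
      rw [Set.not_nonempty_iff_eq_empty] at hemp
      rw [Filter.liminf_eq, hemp, Real.sSup_empty] at hc1
      linarith
    have hmax : max (x - 1) 1 < liminf
        (fun n : ℕ => Real.log (OscSum f N K n SQ) / ((n:ℝ) * Real.log K)) atTop :=
      max_lt (by linarith) hc1
    rw [Filter.liminf_eq] at hmax
    obtain ⟨b, hbS, hbgt⟩ := exists_lt_of_lt_csSup hSne hmax
    have hb1 : 1 < b := lt_of_le_of_lt (le_max_right _ _) hbgt
    have := keyLow b hb1 hbS
    have hxb : x < 1 + b := by
      have := lt_of_le_of_lt (le_max_left (x-1) 1) hbgt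
      linarith
    linarith
  · -- upper bound
    rw [hudim]
    by_contra hcon
    push_neg at hcon
    obtain ⟨x, hx1, hx2⟩ := exists_between hcon
    set d := limsup
      (fun n : ℕ => Real.log (OscSum f N K n SQ + 2 * (K:ℝ) ^ n * (N:ℝ))
        / ((n:ℝ) * Real.log K)) atTop with hd
    have ha1 : (1:ℝ) ≤ x - 1 := by linarith
    have hev := eventually_lt_of_limsup_lt (show d < x - 1 by linarith) hUbnd
    have := keyUp (x - 1) ha1 (hev.mono fun n hn => hn.le)
    linarith
end RFISAux

open RFIS Filter in
/-- **Lemma 4.1.**  For the bilinear RFIF `f`,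
`lower box dim (Γ f) ≥ max {2, 1 + liminf_n log O(f,n) / (n log K)}` and
`upper box dim (Γ f) ≤ 1 + limsup_n log (O(f,n) + 2 Kⁿ N) / (n log K)`. -/
theorem boxDim_bounds_of_oscillation (st : Setup) :
    max 2 (1 + liminf
        (fun n : ℕ => Real.log (OscSum st.f st.N st.K n sq) / ((n : ℝ) * Real.log (st.K : ℝ)))
        atTop)
      ≤ lowerBoxDim (graphOn st.f sq) ∧
    upperBoxDim (graphOn st.f sq)
      ≤ 1 + limsup
        (fun n : ℕ =>
          Real.log (OscSum st.f st.N st.K n sq + 2 * (st.K : ℝ) ^ n * (st.N : ℝ))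
            / ((n : ℝ) * Real.log (st.K : ℝ)))
        atTop := by
  have h1 : 1 ≤ st.N := by have := st.hN; omega
  exact RFISAux.main_aux h1 st.hK st.hfcont
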